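/- arXiv:math/0312044 — 5 statements merged into one kernel-verified Lean document; each statement's English description precedes it below -/
import Mathlib

section
/- Let n ≥ 1 and k ≥ 0 be integers and let f : [0,1] → M_n(ℂ) be a lower semicontinuous projection-valued function such that every projection f(t) has rank exactly k. Then f is continuous with respect to the operator norm. -/
noncomputable section
open scoped Matrix

/-- The closed unit interval `[0,1]`. -/
abbrev I01 : Type := Set.Icc (0:ℝ) 1

/-- `f : [0,1] → Mₙ(ℂ)` is a lower semicontinuous projection-valued function:
every value is a (self-adjoint idempotent) projection and for every vector `v`
the map `t ↦ Re⟨f(t)v, v⟩` is lower semicontinuous. -/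
def IsLSCProjMat (n : ℕ) (f : I01 → Matrix (Fin n) (Fin n) ℂ) : Prop :=
  (∀ t, (f t)ᴴ = f t ∧ f t * f t = f t) ∧
  ∀ v : Fin n → ℂ,
    LowerSemicontinuous fun t => (dotProduct (star v) ((f t).mulVec v)).re

open scoped ComplexConjugate

lemma cont_of_lsc_sum_const {T : Type*} [TopologicalSpace T] {ι : Type*} [Fintype ι]
    [DecidableEq ι] (g : ι → T → ℝ) (hg : ∀ i, LowerSemicontinuous (g i)) (c : ℝ)
    (hsum : ∀ t, ∑ i, g i t = c) (i : ι) : Continuous (g i) := by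
  refine continuous_iff_lower_upperSemicontinuous.mpr ⟨hg i, ?_⟩
  have hrest : LowerSemicontinuous fun t => ∑ j ∈ Finset.univ.erase i, g j t :=
    lowerSemicontinuous_sum fun j _ => hg j
  have husc : UpperSemicontinuous fun t => c - ∑ j ∈ Finset.univ.erase i, g j t := by
    have := (continuous_const.sub continuous_id).comp_lowerSemicontinuous_antitone hrest
      (fun a b hab => by simpa using sub_le_sub_left hab c)
    exact this
  have heq : g i = fun t => c - ∑ j ∈ Finset.univ.erase i, g j t := by
    funext t
    have h := hsum t
    rw [← Finset.add_sum_erase _ _ (Finset.mem_univ i)] at h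
    linarith
  rw [heq]; exact husc

lemma trace_eq_rank' {n : ℕ} (A : Matrix (Fin n) (Fin n) ℂ) (h : A * A = A) :
    A.trace = (A.rank : ℂ) := by
  have hproj : LinearMap.IsProj (LinearMap.range A.mulVecLin) A.mulVecLin := by
    constructor
    · intro x; exact LinearMap.mem_range_self _ x
    · rintro x ⟨y, rfl⟩
      rw [Matrix.mulVecLin_apply, Matrix.mulVecLin_apply, Matrix.mulVec_mulVec, h]
  have ht := hproj.trace
  rw [LinearMap.trace_eq_matrix_trace ℂ (Pi.basisFun ℂ (Fin n)),
    LinearMap.toMatrix_eq_toMatrix'] at ht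
  rw [Matrix.rank, ← ht]
  congr 1
  rw [← Matrix.toLin'_apply' A, LinearMap.toMatrix'_toLin']

lemma sum_quad_eq_trace {n : ℕ} (b : OrthonormalBasis (Fin n) ℂ (EuclideanSpace ℂ (Fin n)))
    (A : Matrix (Fin n) (Fin n) ℂ) :
    ∑ i, dotProduct (star ((WithLp.equiv 2 (Fin n → ℂ)) (b i)))
      (A *ᵥ (WithLp.equiv 2 (Fin n → ℂ)) (b i)) = A.trace := by
  set w : Fin n → Fin n → ℂ := fun i => (WithLp.equiv 2 (Fin n → ℂ)) (b i) with hw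
  set M : Matrix (Fin n) (Fin n) ℂ := Matrix.of w with hM
  have horth : ∀ i j, (inner ℂ (b i) (b j) : ℂ) = if i = j then 1 else 0 :=
    orthonormal_iff_ite.mp b.orthonormal
  have hMM : M * Mᴴ = 1 := by
    ext i j
    have h : (∑ k, conj (w i k) * w j k) = if i = j then 1 else 0 := by
      have h := horth i j
      rw [PiLp.inner_apply] at h
      simp only [RCLike.inner_apply] at h
      rw [← h]
      exact Finset.sum_congr rfl fun k _ => mul_comm _ _
    have hgoal : (M * Mᴴ) i j = conj (∑ k, conj (w i k) * w j k) := by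
      simp [Matrix.mul_apply, Matrix.conjTranspose_apply, hM, map_sum, mul_comm]
    rw [hgoal, h]
    by_cases hij : i = j <;> simp [hij, Matrix.one_apply]
  have hMM' : Mᴴ * M = 1 := mul_eq_one_comm.mp hMM
  have hcol : ∀ j k, ∑ i, conj (w i j) * w i k = if j = k then 1 else 0 := by
    intro j k
    have h2 : (Mᴴ * M) j k = ∑ i, conj (w i j) * w i k := by
      simp [Matrix.mul_apply, Matrix.conjTranspose_apply, hM]
    rw [hMM'] at h2
    rw [← h2, Matrix.one_apply]
  calc ∑ i, dotProduct (star (w i)) (A *ᵥ w i)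
      = ∑ i, ∑ j, conj (w i j) * ∑ k, A j k * w i k := by
        simp [dotProduct, Matrix.mulVec, Pi.star_apply]
    _ = ∑ j, ∑ k, A j k * ∑ i, conj (w i j) * w i k := by
        rw [Finset.sum_comm]
        refine Finset.sum_congr rfl fun j _ => ?_
        simp only [Finset.mul_sum]
        rw [Finset.sum_comm]
        refine Finset.sum_congr rfl fun k _ => ?_
        refine Finset.sum_congr rfl fun i _ => ?_
        ring
    _ = A.trace := by
        simp [hcol, Matrix.trace, Matrix.diag]

lemma quad_real {n : ℕ} (A : Matrix (Fin n) (Fin n) ℂ) (h : Aᴴ = A) (v : Fin n → ℂ) :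
    dotProduct (star v) (A *ᵥ v) = ((dotProduct (star v) (A *ᵥ v)).re : ℂ) := by
  have hc : conj (dotProduct (star v) (A *ᵥ v)) = dotProduct (star v) (A *ᵥ v) := by
    show star (dotProduct (star v) (A *ᵥ v)) = _
    conv_lhs => rw [Matrix.star_dotProduct, star_star, Matrix.star_mulVec, h,
      ← Matrix.dotProduct_mulVec]
  exact ((Complex.conj_eq_iff_re).mp hc).symm

lemma polar {n : ℕ} (A : Matrix (Fin n) (Fin n) ℂ) (x y : Fin n → ℂ) :
    dotProduct (star x) (A *ᵥ y) =
      (dotProduct (star (x+y)) (A *ᵥ (x+y))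
       - dotProduct (star (x-y)) (A *ᵥ (x-y))
       - Complex.I * dotProduct (star (x + Complex.I • y)) (A *ᵥ (x + Complex.I • y))
       + Complex.I * dotProduct (star (x - Complex.I • y)) (A *ᵥ (x - Complex.I • y))) / 4 := by
  simp only [star_add, star_sub, star_smul, Matrix.mulVec_add, Matrix.mulVec_sub,
    Matrix.mulVec_smul, add_dotProduct, sub_dotProduct, smul_dotProduct,
    dotProduct_add, dotProduct_sub, dotProduct_smul, smul_eq_mul,
    RCLike.star_def, Complex.conj_I]
  ring_nf
  rw [Complex.I_sq]
  ring

/-- a lower semicontinuous projection-valued function on `[0,1]`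
with values rank-`k` projections in `Mₙ(ℂ)` is continuous. -/
theorem stmt0 (n k : ℕ) (hn : 1 ≤ n) (f : I01 → Matrix (Fin n) (Fin n) ℂ)
    (hf : IsLSCProjMat n f) (hrank : ∀ t, (f t).rank = k) :
    Continuous f := by
  obtain ⟨hpr, hlsc⟩ := hf
  have htr : ∀ t, (f t).trace = (k : ℂ) := fun t => by
    rw [trace_eq_rank' (f t) (hpr t).2, hrank t]
  -- continuity of the real quadratic form for every vector
  have keyR : ∀ v : Fin n → ℂ,
      Continuous fun t => (dotProduct (star v) ((f t) *ᵥ v)).re := by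
    intro v
    by_cases hv : v = 0
    · simp only [hv, star_zero, dotProduct_zero, zero_dotProduct]
      exact continuous_const
    · set vE : EuclideanSpace ℂ (Fin n) := (WithLp.equiv 2 (Fin n → ℂ)).symm v with hvE
      have hvE0 : vE ≠ 0 := by
        simpa [hvE] using hv
      set c : ℝ := ‖vE‖ with hc
      have hc0 : c ≠ 0 := norm_ne_zero_iff.mpr hvE0
      set u : EuclideanSpace ℂ (Fin n) := ((c : ℂ)⁻¹) • vE with hu
      have hun : ‖u‖ = 1 := by
        rw [hu, norm_smul]
        simp [hc0, abs_of_nonneg (norm_nonneg vE)]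
        have hcpos : 0 ≤ c := norm_nonneg vE
        rw [abs_of_nonneg hcpos]
        exact inv_mul_cancel₀ hc0
      set i0 : Fin n := ⟨0, hn⟩ with hi0
      have horm : Orthonormal ℂ (Set.restrict {i0} fun _ : Fin n => u) := by
        constructor
        · rintro ⟨i, hi⟩
          exact hun
        · rintro ⟨i, hi⟩ ⟨j, hj⟩ hij
          simp only [Set.mem_singleton_iff] at hi hj
          exact absurd (Subtype.ext (hi.trans hj.symm)) hij
      obtain ⟨b, hb⟩ := horm.exists_orthonormalBasis_extension_of_card_eq (by simp)
      set w : Fin n → Fin n → ℂ := fun i => (WithLp.equiv 2 (Fin n → ℂ)) (b i) with hwdef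
      set g : Fin n → I01 → ℝ :=
        fun i t => (dotProduct (star (w i)) ((f t) *ᵥ (w i))).re with hgdef
      have hg : ∀ i, LowerSemicontinuous (g i) := fun i => hlsc (w i)
      have hsum : ∀ t, ∑ i, g i t = (k : ℝ) := by
        intro t
        have h1 := sum_quad_eq_trace b (f t)
        rw [htr t] at h1
        have h2 := congrArg Complex.re h1
        rw [Complex.re_sum] at h2
        refine h2.trans ?_
        simp
      have cont0 : Continuous (g i0) := cont_of_lsc_sum_const g hg _ hsum i0
      have hw0 : w i0 = ((c : ℂ)⁻¹) • v := by
        rw [hwdef]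
        simp only [hb i0 (Set.mem_singleton i0), hu, hvE]
        rfl
      have hfun : (fun t => (dotProduct (star v) ((f t) *ᵥ v)).re)
          = fun t => (c ^ 2) * g i0 t := by
        funext t
        rw [hgdef]
        simp only [hw0, star_smul, smul_dotProduct, Matrix.mulVec_smul,
          dotProduct_smul, smul_eq_mul]
        have hst : star ((c : ℂ)⁻¹) = (c : ℂ)⁻¹ := by
          rw [Complex.star_def, ← Complex.ofReal_inv, Complex.conj_ofReal]
        rw [hst]
        simp only [← Complex.ofReal_inv]
        rw [← mul_assoc, ← Complex.ofReal_mul, Complex.re_ofReal_mul]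
        field_simp
      rw [hfun]
      exact continuous_const.mul cont0
  -- complex-valued quadratic forms are continuous
  have keyC : ∀ v : Fin n → ℂ,
      Continuous fun t => dotProduct (star v) ((f t) *ᵥ v) := by
    intro v
    have : (fun t => dotProduct (star v) ((f t) *ᵥ v))
        = fun t => ((dotProduct (star v) ((f t) *ᵥ v)).re : ℂ) := by
      funext t; exact quad_real (f t) (hpr t).1 v
    rw [this]
    exact Complex.continuous_ofReal.comp (keyR v)
  -- sesquilinear forms continuous via polarization
  have keyB : ∀ x y : Fin n → ℂ,
      Continuous fun t => dotProduct (star x) ((f t) *ᵥ y) := by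
    intro x y
    have : (fun t => dotProduct (star x) ((f t) *ᵥ y))
        = fun t =>
          (dotProduct (star (x+y)) ((f t) *ᵥ (x+y))
           - dotProduct (star (x-y)) ((f t) *ᵥ (x-y))
           - Complex.I * dotProduct (star (x + Complex.I • y)) ((f t) *ᵥ (x + Complex.I • y))
           + Complex.I * dotProduct (star (x - Complex.I • y)) ((f t) *ᵥ (x - Complex.I • y))) / 4 := by
      funext t; exact polar (f t) x y
    rw [this]
    exact ((((keyC (x+y)).sub (keyC (x-y))).sub
      (continuous_const.mul (keyC (x + Complex.I • y)))).add
      (continuous_const.mul (keyC (x - Complex.I • y)))).div_const 4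
  refine continuous_matrix fun i j => ?_
  have hij : (fun t => f t i j)
      = fun t => dotProduct (star (Pi.single i (1:ℂ))) ((f t) *ᵥ Pi.single j 1) := by
    funext t
    have hst : star (Pi.single i (1:ℂ)) = (Pi.single i 1 : Fin n → ℂ) := by
      funext l
      rcases eq_or_ne l i with h | h <;> simp [Pi.single_apply, h]
    rw [hst, single_dotProduct, one_mul, Matrix.mulVec_single_one,
      Matrix.col_apply]
  rw [hij]
  exact keyB _ _
end
end

section
/- Let H be a separable infinite-dimensional complex Hilbert space, k ≥ 0 an integer, and f : [0,1] → B(H) a lower semicontinuous projection-valued function such that every projection f(t) has rank exactly k. Then there exist a norm-continuous function V : [0,1] → B(H) and a projection p ∈ B(H) of rank k such that V(t)·V(t)* = p and V(t)*·V(t) = f(t) for all t ∈ [0,1]; in particular each V(t) is a finite-rank partial isometry. -/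
noncomputable section

/-- `f : [0,1] → B(H)` is a lower semicontinuous projection-valued function:
every value is a (self-adjoint idempotent) projection and for every vector `v`
the map `t ↦ Re⟨f(t)v, v⟩` is lower semicontinuous. -/
def IsLSCProjOp (H : Type*) [NormedAddCommGroup H] [InnerProductSpace ℂ H]
    [CompleteSpace H] (f : I01 → H →L[ℂ] H) : Prop :=
  (∀ t, IsSelfAdjoint (f t) ∧ f t * f t = f t) ∧
  ∀ v : H, LowerSemicontinuous fun t => (inner ℂ ((f t) v) v : ℂ).re

/-- A bounded operator `T` on `H` has rank `k`: its range is a `k`-dimensional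
subspace of `H`. -/
def OpRank (H : Type*) [NormedAddCommGroup H] [InnerProductSpace ℂ H]
    (T : H →L[ℂ] H) (k : ℕ) : Prop :=
  FiniteDimensional ℂ (LinearMap.range (T : H →ₗ[ℂ] H)) ∧
    Module.finrank ℂ (LinearMap.range (T : H →ₗ[ℂ] H)) = k

set_option linter.unusedSectionVars false
set_option linter.unusedVariables false

open Filter Topology

set_option linter.unusedSectionVars false

open Filter Topology

namespace SqrtAux

variable {A : Type*} [NormedRing A] [NormedAlgebra ℝ A] [CompleteSpace A]

/-- Newton-type iteration for `y` solving `y = (d + y^2)/2`, i.e. `(1-y)^2 = 1-d`. -/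
def Y (d : A) : ℕ → A
  | 0 => 0
  | n+1 => (2⁻¹ : ℝ) • (d + Y d n * Y d n)

variable {d : A}

theorem normY (hd : ‖d‖ ≤ 4⁻¹) : ∀ n, ‖Y d n‖ ≤ 3⁻¹ := by
  intro n
  induction n with
  | zero => simp [Y]
  | succ n ih =>
    have h1 : ‖Y d n * Y d n‖ ≤ 3⁻¹ * 3⁻¹ := norm_mul_le_of_le ih ih
    have : ‖Y d (n+1)‖ ≤ 2⁻¹ * (4⁻¹ + 3⁻¹ * 3⁻¹) := by
      rw [Y, norm_smul]
      have := norm_add_le d (Y d n * Y d n)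
      simp only [Real.norm_eq_abs]
      rw [abs_of_pos (by norm_num : (0:ℝ) < 2⁻¹)]
      nlinarith [norm_nonneg (d + Y d n * Y d n)]
    linarith
 
theorem diffY (hd : ‖d‖ ≤ 4⁻¹) : ∀ n, ‖Y d (n+1) - Y d n‖ ≤ 8⁻¹ * (3⁻¹)^n := by
  intro n
  induction n with
  | zero => simp [Y, norm_smul]; linarith
  | succ n ih =>
    have key : Y d (n+2) - Y d (n+1)
        = (2⁻¹ : ℝ) • (Y d (n+1) * (Y d (n+1) - Y d n) + (Y d (n+1) - Y d n) * Y d n) := by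
      show ((2⁻¹ : ℝ) • (d + Y d (n+1) * Y d (n+1))) - ((2⁻¹ : ℝ) • (d + Y d n * Y d n)) = _
      rw [← smul_sub]
      congr 1
      noncomm_ring
    rw [key, norm_smul]
    simp only [Real.norm_eq_abs]
    rw [abs_of_pos (by norm_num : (0:ℝ) < 2⁻¹)]
    have h1 : ‖Y d (n+1) * (Y d (n+1) - Y d n)‖ ≤ 3⁻¹ * (8⁻¹ * (3⁻¹)^n) :=
      norm_mul_le_of_le (normY hd _) ih
    have h2 : ‖(Y d (n+1) - Y d n) * Y d n‖ ≤ (8⁻¹ * (3⁻¹)^n) * 3⁻¹ :=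
      norm_mul_le_of_le ih (normY hd _)
    have h3 := norm_add_le (Y d (n+1) * (Y d (n+1) - Y d n)) ((Y d (n+1) - Y d n) * Y d n)
    have : (8:ℝ)⁻¹ * 3⁻¹ ^ (n + 1) = 2⁻¹ * (3⁻¹ * (8⁻¹ * (3⁻¹)^n) + (8⁻¹ * (3⁻¹)^n) * 3⁻¹) := by
      ring
    rw [this]
    nlinarith [norm_nonneg (Y d (n+1) * (Y d (n+1) - Y d n) + (Y d (n+1) - Y d n) * Y d n)]

theorem cauchyY (hd : ‖d‖ ≤ 4⁻¹) : CauchySeq (Y d) := by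
  apply cauchySeq_of_le_geometric (3⁻¹ : ℝ) (8⁻¹ : ℝ) (by norm_num)
  intro n
  rw [dist_eq_norm, norm_sub_rev]
  exact diffY hd n

/-- The solution of `y = (d + y^2)/2`. -/
def ysol (d : A) : A := limUnder atTop (Y d)

theorem tendsto_ysol (hd : ‖d‖ ≤ 4⁻¹) : Tendsto (Y d) atTop (𝓝 (ysol d)) :=
  (cauchyY hd).tendsto_limUnder

theorem ysol_fixed (hd : ‖d‖ ≤ 4⁻¹) : ysol d = (2⁻¹ : ℝ) • (d + ysol d * ysol d) := by
  have h1 : Tendsto (fun n => Y d (n+1)) atTop (𝓝 (ysol d)) :=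
    (tendsto_ysol hd).comp (tendsto_add_atTop_nat 1)
  have h2 : Tendsto (fun n => Y d (n+1)) atTop (𝓝 ((2⁻¹ : ℝ) • (d + ysol d * ysol d))) := by
    simp only [Y]
    exact (tendsto_const_nhds.add ((tendsto_ysol hd).mul (tendsto_ysol hd))).const_smul _
  exact tendsto_nhds_unique h1 h2

theorem norm_ysol (hd : ‖d‖ ≤ 4⁻¹) : ‖ysol d‖ ≤ 3⁻¹ :=
  le_of_tendsto ((tendsto_ysol hd).norm) (Eventually.of_forall (normY hd))

theorem commute_ysol {x : A} (hd : ‖d‖ ≤ 4⁻¹) (h : Commute x d) : Commute x (ysol d) := by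
  have hn : ∀ n, Commute x (Y d n) := by
    intro n
    induction n with
    | zero => simp [Y]
    | succ n ih => exact ((h.add_right (ih.mul_right ih)).smul_right _)
  have h1 : Tendsto (fun n => x * Y d n) atTop (𝓝 (x * ysol d)) :=
    (tendsto_ysol hd).const_mul x
  have h2 : Tendsto (fun n => Y d n * x) atTop (𝓝 (ysol d * x)) :=
    (tendsto_ysol hd).mul_const x
  have : (fun n => x * Y d n) = (fun n => Y d n * x) := funext fun n => (hn n).eq
  rw [this] at h1
  exact tendsto_nhds_unique h1 h2

theorem star_ysol [StarRing A] [NormedStarGroup A] [StarModule ℝ A]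
    (hd : ‖d‖ ≤ 4⁻¹) (h : star d = d) : star (ysol d) = ysol d := by
  have hn : ∀ n, star (Y d n) = Y d n := by
    intro n
    induction n with
    | zero => simp [Y]
    | succ n ih => simp [Y, star_smul, star_add, star_mul, ih, h]
  have h1 : Tendsto (fun n => star (Y d n)) atTop (𝓝 (star (ysol d))) :=
    (tendsto_ysol hd).star
  have h2 : Tendsto (fun n => star (Y d n)) atTop (𝓝 (ysol d)) := by
    simp only [hn]; exact tendsto_ysol hd
  exact tendsto_nhds_unique h1 h2

theorem ysol_lipschitz {d' : A} (hd : ‖d‖ ≤ 4⁻¹) (hd' : ‖d'‖ ≤ 4⁻¹) :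
    ‖ysol d - ysol d'‖ ≤ ‖d - d'‖ := by
  have key : ysol d - ysol d'
      = (2⁻¹ : ℝ) • ((d - d') + (ysol d * (ysol d - ysol d') + (ysol d - ysol d') * ysol d')) := by
    conv_lhs => rw [ysol_fixed hd, ysol_fixed hd']
    rw [← smul_sub]
    congr 1
    noncomm_ring
  have h1 : ‖ysol d * (ysol d - ysol d')‖ ≤ 3⁻¹ * ‖ysol d - ysol d'‖ :=
    norm_mul_le_of_le (norm_ysol hd) le_rfl
  have h2 : ‖(ysol d - ysol d') * ysol d'‖ ≤ ‖ysol d - ysol d'‖ * 3⁻¹ :=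
    norm_mul_le_of_le le_rfl (norm_ysol hd')
  have h3 : ‖ysol d - ysol d'‖ ≤ 2⁻¹ * (‖d - d'‖ + (3⁻¹ * ‖ysol d - ysol d'‖ + ‖ysol d - ysol d'‖ * 3⁻¹)) := by
    calc ‖ysol d - ysol d'‖ = _ := by rw [key]
    _ ≤ _ := by
        rw [norm_smul]
        simp only [Real.norm_eq_abs]
        rw [abs_of_pos (by norm_num : (0:ℝ) < 2⁻¹)]
        have := norm_add_le (d - d') (ysol d * (ysol d - ysol d') + (ysol d - ysol d') * ysol d')
        have := norm_add_le (ysol d * (ysol d - ysol d')) ((ysol d - ysol d') * ysol d')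
        nlinarith
  have := norm_nonneg (d - d')
  have := norm_nonneg (ysol d - ysol d')
  linarith

theorem ysol_zero : ysol (0 : A) = 0 := by
  have hz : ∀ n, Y (0:A) n = 0 := by
    intro n; induction n with
    | zero => rfl
    | succ n ih => simp [Y, ih]
  have h1 : Tendsto (Y (0:A)) atTop (𝓝 (ysol 0)) := tendsto_ysol (by simp)
  have h2 : Tendsto (Y (0:A)) atTop (𝓝 0) := by
    rw [show Y (0:A) = fun _ => 0 from funext hz]; exact tendsto_const_nhds
  exact tendsto_nhds_unique h1 h2

theorem continuous_ysol {T : Type*} [TopologicalSpace T] {g : T → A}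
    (hg : Continuous g) (hb : ∀ t, ‖g t‖ ≤ 4⁻¹) :
    Continuous fun t => ysol (g t) := by
  rw [continuous_iff_continuousAt]
  intro t₀
  rw [ContinuousAt, tendsto_iff_dist_tendsto_zero]
  have hle : ∀ t, dist (ysol (g t)) (ysol (g t₀)) ≤ dist (g t) (g t₀) := fun t => by
    rw [dist_eq_norm, dist_eq_norm]; exact ysol_lipschitz (hb t) (hb t₀)
  have hten : Tendsto (fun t => dist (g t) (g t₀)) (𝓝 t₀) (𝓝 0) := by
    have := (hg.tendsto t₀).dist (tendsto_const_nhds (x := g t₀))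
    simpa using this
  exact squeeze_zero (fun t => dist_nonneg) hle hten

end SqrtAux

namespace SqrtAux

variable {A : Type*} [NormedRing A] [NormedAlgebra ℝ A] [CompleteSpace A]

/-- `sq d` is the square root of `1 - d` (for `‖d‖ ≤ 1/4`). -/
def sq (d : A) : A := 1 - ysol d

/-- `isq d` is the inverse square root of `1 - d` (for `‖d‖ ≤ 1/4`). -/
def isq (d : A) : A := Ring.inverse (sq d)

variable {d : A}

theorem sq_mul_sq (hd : ‖d‖ ≤ 4⁻¹) : sq d * sq d = 1 - d := by
  have hf := ysol_fixed hd
  have h2 : (2:ℝ) • ysol d = d + ysol d * ysol d := by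
    have : (2:ℝ) • ysol d = (2:ℝ) • ((2⁻¹ : ℝ) • (d + ysol d * ysol d)) := by rw [← hf]
    rwa [smul_smul, (by norm_num : (2:ℝ) * 2⁻¹ = 1), one_smul] at this
  have h3 : ysol d + ysol d = d + ysol d * ysol d := by rw [← two_smul ℝ (ysol d)]; exact h2
  rw [sq]
  have h4 : (1 - ysol d) * (1 - ysol d) = 1 - (ysol d + ysol d) + ysol d * ysol d := by
    noncomm_ring
  rw [h4, h3]
  noncomm_ring

theorem isUnit_sq (hd : ‖d‖ ≤ 4⁻¹) : IsUnit (sq d) := by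
  have h : ‖(1:A) - sq d‖ < 1 := by
    rw [sq]
    simp only [sub_sub_cancel]
    exact lt_of_le_of_lt (norm_ysol hd) (by norm_num)
  have := (Units.oneSub (1 - sq d) h).isUnit
  simpa using this

theorem isq_mul_sq (hd : ‖d‖ ≤ 4⁻¹) : isq d * sq d = 1 := Ring.inverse_mul_cancel _ (isUnit_sq hd)

theorem sq_mul_isq (hd : ‖d‖ ≤ 4⁻¹) : sq d * isq d = 1 := Ring.mul_inverse_cancel _ (isUnit_sq hd)

theorem commute_sq {x : A} (hd : ‖d‖ ≤ 4⁻¹) (h : Commute x d) : Commute x (sq d) :=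
  (Commute.one_right x).sub_right (commute_ysol hd h)

theorem commute_isq {x : A} (hd : ‖d‖ ≤ 4⁻¹) (h : Commute x d) : Commute x (isq d) := by
  have hs := commute_sq hd h
  show x * isq d = isq d * x
  calc x * isq d = isq d * sq d * (x * isq d) := by rw [isq_mul_sq hd, one_mul]
  _ = isq d * (sq d * x) * isq d := by noncomm_ring
  _ = isq d * (x * sq d) * isq d := by rw [← hs.eq]
  _ = isq d * x * (sq d * isq d) := by noncomm_ring
  _ = isq d * x := by rw [sq_mul_isq hd, mul_one]

theorem star_sq [StarRing A] [NormedStarGroup A] [StarModule ℝ A]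
    (hd : ‖d‖ ≤ 4⁻¹) (h : star d = d) : star (sq d) = sq d := by
  rw [sq, star_sub, star_one, star_ysol hd h]

theorem star_isq [StarRing A] [NormedStarGroup A] [StarModule ℝ A]
    (hd : ‖d‖ ≤ 4⁻¹) (h : star d = d) : star (isq d) = isq d := by
  have hs := star_sq hd h
  calc star (isq d) = star (isq d) * (sq d * isq d) := by rw [sq_mul_isq hd, mul_one]
  _ = (star (isq d) * star (sq d)) * isq d := by rw [hs]; noncomm_ring
  _ = star (sq d * isq d) * isq d := by rw [star_mul]
  _ = isq d := by rw [sq_mul_isq hd, star_one, one_mul]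

theorem sq_zero : sq (0 : A) = 1 := by rw [sq, ysol_zero, sub_zero]

theorem isq_zero : isq (0 : A) = 1 := by rw [isq, sq_zero, Ring.inverse_one]

theorem continuous_isq {T : Type*} [TopologicalSpace T] {g : T → A}
    (hg : Continuous g) (hb : ∀ t, ‖g t‖ ≤ 4⁻¹) :
    Continuous fun t => isq (g t) := by
  have hsq : Continuous fun t => sq (g t) :=
    continuous_const.sub (continuous_ysol hg hb)
  rw [continuous_iff_continuousAt]
  intro t₀
  obtain ⟨u, hu⟩ := isUnit_sq (hb t₀)
  exact ContinuousAt.comp (hu ▸ NormedRing.inverse_continuousAt u) hsq.continuousAt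

end SqrtAux

/-! ### The Kato unitary conjugating two close projections -/

namespace ProjU

open SqrtAux

variable {A : Type*} [NormedRing A] [NormedAlgebra ℝ A] [CompleteSpace A]
  [StarRing A] [NormedStarGroup A] [StarModule ℝ A]

def dd (p q : A) : A := (p - q) * (p - q)

def aa (p q : A) : A := q * p + (1 - q) * (1 - p)

def uu (p q : A) : A := aa p q * isq (dd p q)

variable {p q : A}

theorem dd_comm : dd p q = dd q p := by rw [dd, dd]; noncomm_ring

theorem norm_dd (h : ‖p - q‖ ≤ 2⁻¹) : ‖dd p q‖ ≤ 4⁻¹ := by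
  have h2 := norm_mul_le (p - q) (p - q)
  rw [dd]
  nlinarith [norm_nonneg (p - q)]

theorem star_dd (hp : star p = p) (hq : star q = q) : star (dd p q) = dd p q := by
  rw [dd, star_mul, star_sub, hp, hq]

theorem star_aa (hp : star p = p) (hq : star q = q) : star (aa p q) = aa q p := by
  rw [aa, aa, star_add, star_mul, star_mul, star_sub, star_sub, star_one, hp, hq]

theorem dd_expand (hp : p * p = p) (hq : q * q = q) : dd p q = p - p*q - q*p + q := by
  have h1 : dd p q = p*p - p*q - q*p + q*q := by rw [dd]; noncomm_ring
  rw [h1, hp, hq]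

theorem commute_p_dd (hp : p * p = p) (hq : q * q = q) : Commute p (dd p q) := by
  show p * dd p q = dd p q * p
  rw [dd_expand hp hq]
  have L : p * (p - p*q - q*p + q) = p*p - (p*p)*q - (p*q)*p + p*q := by noncomm_ring
  have R : (p - p*q - q*p + q) * p = p*p - (p*q)*p - q*(p*p) + q*p := by noncomm_ring
  rw [L, R, hp]
  abel

theorem aa_mul_proj (hp : p * p = p) (hq : q * q = q) : aa p q * p = q * aa p q := by
  have h1 : aa p q * p = q * (p*p) + (1-q)*((1-p)*p) := by rw [aa]; noncomm_ring
  have h2 : q * aa p q = (q*q) * p + (q*(1-q))*(1-p) := by rw [aa]; noncomm_ring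
  have h3 : (1-p)*p = 0 := by rw [sub_mul, one_mul, hp, sub_self]
  have h4 : q*(1-q) = 0 := by rw [mul_sub, mul_one, hq, sub_self]
  rw [h1, h2, h3, h4, hp, hq]; simp

theorem aaT_mul_aa (hp : p * p = p) (hq : q * q = q) : aa q p * aa p q = 1 - dd p q := by
  have e1 : aa q p * aa p q =
      p*(q*q)*p + p*(q*(1-q))*(1-p) + (1-p)*((1-q)*q)*p + (1-p)*((1-q)*(1-q))*(1-p) := by
    rw [aa, aa]; noncomm_ring
  have e2 : q*(1-q) = 0 := by rw [mul_sub, mul_one, hq, sub_self]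
  have e3 : (1-q)*q = 0 := by rw [sub_mul, one_mul, hq, sub_self]
  have e4 : (1-q)*(1-q) = 1 - q := by
    have : (1-q)*(1-q) = 1 - q - q + q*q := by noncomm_ring
    rw [this, hq]; abel
  rw [e2, e3, e4, hq] at e1
  rw [mul_zero, zero_mul, mul_zero, zero_mul, add_zero, add_zero] at e1
  have E : (1-p)*(1-q)*(1-p) = 1 - q - p + p*q - p + q*p + p*p - p*q*p := by noncomm_ring
  rw [hp] at E
  rw [e1, E, dd_expand hp hq]
  abel

theorem aa_mul_aaT (hp : p * p = p) (hq : q * q = q) : aa p q * aa q p = 1 - dd p q := by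
  have h := aaT_mul_aa hq hp
  rwa [← dd_comm] at h

theorem commute_aa_dd (hp : p * p = p) (hq : q * q = q) : Commute (aa p q) (dd p q) := by
  have h1 : dd p q = 1 - aa q p * aa p q := by rw [aaT_mul_aa hp hq, sub_sub_cancel]
  have h2 := aa_mul_aaT hp hq
  show aa p q * dd p q = dd p q * aa p q
  calc aa p q * dd p q = aa p q * (1 - aa q p * aa p q) := by rw [← h1]
  _ = aa p q - (aa p q * aa q p) * aa p q := by noncomm_ring
  _ = aa p q - (1 - dd p q) * aa p q := by rw [h2]
  _ = dd p q * aa p q := by noncomm_ring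

section Main

variable (hp : star p = p) (hp2 : p * p = p) (hq : star q = q) (hq2 : q * q = q)
  (hn : ‖p - q‖ ≤ 2⁻¹)

include hp hp2 hq hq2 hn

theorem star_uu : star (uu p q) = isq (dd p q) * aa q p := by
  rw [uu, star_mul, star_isq (norm_dd hn) (star_dd hp hq), star_aa hp hq]

theorem uu_mul_star : uu p q * star (uu p q) = 1 := by
  have hd := norm_dd hn
  have c1 : aa p q * isq (dd p q) = isq (dd p q) * aa p q :=
    (commute_isq hd (commute_aa_dd hp2 hq2)).eq
  rw [star_uu hp hp2 hq hq2 hn, uu]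
  calc (aa p q * isq (dd p q)) * (isq (dd p q) * aa q p)
      = (isq (dd p q) * aa p q) * (isq (dd p q) * aa q p) := by rw [c1]
  _ = isq (dd p q) * (aa p q * isq (dd p q)) * aa q p := by noncomm_ring
  _ = isq (dd p q) * (isq (dd p q) * aa p q) * aa q p := by rw [c1]
  _ = (isq (dd p q) * isq (dd p q)) * (aa p q * aa q p) := by noncomm_ring
  _ = (isq (dd p q) * isq (dd p q)) * (SqrtAux.sq (dd p q) * SqrtAux.sq (dd p q)) := by
      rw [aa_mul_aaT hp2 hq2, ← sq_mul_sq hd]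
  _ = isq (dd p q) * (isq (dd p q) * SqrtAux.sq (dd p q)) * SqrtAux.sq (dd p q) := by noncomm_ring
  _ = 1 := by rw [isq_mul_sq hd, mul_one, isq_mul_sq hd]

theorem star_mul_uu : star (uu p q) * uu p q = 1 := by
  have hd := norm_dd hn
  rw [star_uu hp hp2 hq hq2 hn, uu]
  calc (isq (dd p q) * aa q p) * (aa p q * isq (dd p q))
      = isq (dd p q) * (aa q p * aa p q) * isq (dd p q) := by noncomm_ring
  _ = isq (dd p q) * (SqrtAux.sq (dd p q) * SqrtAux.sq (dd p q)) * isq (dd p q) := by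
      rw [aaT_mul_aa hp2 hq2, ← sq_mul_sq hd]
  _ = (isq (dd p q) * SqrtAux.sq (dd p q)) * (SqrtAux.sq (dd p q) * isq (dd p q)) := by noncomm_ring
  _ = 1 := by rw [isq_mul_sq hd, sq_mul_isq hd, one_mul]

theorem uu_conj : uu p q * p * star (uu p q) = q := by
  have hd := norm_dd hn
  have c2 : p * isq (dd p q) = isq (dd p q) * p :=
    (commute_isq hd (commute_p_dd hp2 hq2)).eq
  have huu := uu_mul_star hp hp2 hq hq2 hn
  rw [star_uu hp hp2 hq hq2 hn, uu] at huu ⊢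
  calc aa p q * isq (dd p q) * p * (isq (dd p q) * aa q p)
      = aa p q * (isq (dd p q) * p) * (isq (dd p q) * aa q p) := by noncomm_ring
  _ = aa p q * (p * isq (dd p q)) * (isq (dd p q) * aa q p) := by rw [c2]
  _ = (aa p q * p) * (isq (dd p q) * (isq (dd p q) * aa q p)) := by noncomm_ring
  _ = (q * aa p q) * (isq (dd p q) * (isq (dd p q) * aa q p)) := by rw [aa_mul_proj hp2 hq2]
  _ = q * ((aa p q * isq (dd p q)) * (isq (dd p q) * aa q p)) := by noncomm_ring
  _ = q := by rw [huu, mul_one]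

end Main

theorem uu_self (hp2 : p * p = p) : uu p p = 1 := by
  have h1 : dd p p = 0 := by rw [dd, sub_self, zero_mul]
  have h2 : aa p p = 1 := by
    have : aa p p = p*p + (1 - p - p + p*p) := by rw [aa]; noncomm_ring
    rw [hp2] at this
    rw [this]; abel
  rw [uu, h1, h2, isq_zero, one_mul]

theorem continuous_uu {T : Type*} [TopologicalSpace T] {g : T → A} (P : A)
    (hg : Continuous g) (hb : ∀ t, ‖P - g t‖ ≤ 2⁻¹) :
    Continuous fun t => uu P (g t) := by
  have haa : Continuous fun t => aa P (g t) :=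
    (hg.mul continuous_const).add ((continuous_const.sub hg).mul continuous_const)
  have hdd : Continuous fun t => dd P (g t) :=
    (continuous_const.sub hg).mul (continuous_const.sub hg)
  exact haa.mul (continuous_isq hdd fun t => norm_dd (hb t))

end ProjU

/-! ### Projections in Hilbert space -/

namespace ProjH

open RCLike ContinuousLinearMap
open scoped InnerProductSpace

variable {H : Type*} [NormedAddCommGroup H] [InnerProductSpace ℂ H] [CompleteSpace H]

theorem proj_adj (P : H →L[ℂ] H) (hP : star P = P) (x y : H) :
    ⟪P x, y⟫_ℂ = ⟪x, P y⟫_ℂ := by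
  have h : ContinuousLinearMap.adjoint P = P := by rw [← ContinuousLinearMap.star_eq_adjoint, hP]
  conv_lhs => rw [← h]
  exact ContinuousLinearMap.adjoint_inner_left P y x

theorem proj_re_inner (P : H →L[ℂ] H) (hP : star P = P) (hP2 : P * P = P) (x : H) :
    (inner ℂ (P x) x : ℂ).re = ‖P x‖ ^ 2 := by
  have h1 : P (P x) = P x := by rw [← ContinuousLinearMap.mul_apply, hP2]
  have h2 : (inner ℂ (P x) x : ℂ) = inner ℂ (P x) (P x) := by
    conv_lhs => rw [← h1]
    exact proj_adj P hP (P x) x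
  rw [h2]
  have := inner_self_eq_norm_sq (𝕜 := ℂ) (P x)
  simpa using this

theorem proj_norm_apply_le (P : H →L[ℂ] H) (hP : star P = P) (hP2 : P * P = P) (x : H) :
    ‖P x‖ ≤ ‖x‖ := by
  have h := proj_re_inner P hP hP2 x
  have h2 : ‖(inner ℂ (P x) x : ℂ)‖ ≤ ‖P x‖ * ‖x‖ := norm_inner_le_norm _ _
  have h3 : (inner ℂ (P x) x : ℂ).re ≤ ‖(inner ℂ (P x) x : ℂ)‖ := Complex.re_le_norm _
  by_cases h0 : ‖P x‖ = 0
  · rw [h0]; exact norm_nonneg x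
  · have hpos : 0 < ‖P x‖ := lt_of_le_of_ne (norm_nonneg _) (Ne.symm h0)
    nlinarith

theorem proj_one_sub_star (P : H →L[ℂ] H) (hP : star P = P) : star (1 - P) = 1 - P := by
  rw [star_sub, star_one, hP]

theorem proj_one_sub_idem (P : H →L[ℂ] H) (hP2 : P * P = P) : (1 - P) * (1 - P) = 1 - P := by
  have h : (1 - P) * (1 - P) = 1 - P - P + P * P := by noncomm_ring
  rw [h, hP2]; abel

theorem norm_sub_proj_le (P : H →L[ℂ] H) (hP : star P = P) (hP2 : P * P = P) (x : H) :
    ‖x - P x‖ ≤ ‖x‖ := by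
  have := proj_norm_apply_le (1 - P) (proj_one_sub_star P hP) (proj_one_sub_idem P hP2) x
  simpa using this

theorem proj_pythag (P : H →L[ℂ] H) (hP : star P = P) (hP2 : P * P = P) (x : H) :
    ‖x‖ ^ 2 = ‖P x‖ ^ 2 + ‖x - P x‖ ^ 2 := by
  have h1 : P (x - P x) = 0 := by
    rw [map_sub, ← ContinuousLinearMap.mul_apply, hP2, sub_self]
  have horth : (inner ℂ (P x) (x - P x) : ℂ) = 0 := by
    rw [proj_adj P hP x (x - P x), h1, inner_zero_right]
  have hsum : P x + (x - P x) = x := by abel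
  have := norm_add_sq (𝕜 := ℂ) (P x) (x - P x)
  rw [hsum, horth] at this
  simpa using this

theorem proj_fix (P : H →L[ℂ] H) (hP2 : P * P = P) {x : H} (hx : x ∈ LinearMap.range (P : H →ₗ[ℂ] H)) :
    P x = x := by
  obtain ⟨y, rfl⟩ := hx
  change P (P y) = P y
  rw [← ContinuousLinearMap.mul_apply, hP2]

theorem norm_sub_le_three (P Q : H →L[ℂ] H) (hP : star P = P) (hP2 : P * P = P)
    (hQ : star Q = Q) (hQ2 : Q * Q = Q) {k : ℕ}
    (hkP : OpRank H P k) (hkQ : OpRank H Q k) {δ : ℝ} (hδ0 : 0 ≤ δ) (hδ : δ ≤ 2⁻¹)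
    (h : ∀ v ∈ LinearMap.range (Q : H →ₗ[ℂ] H), ‖v - P v‖ ≤ δ * ‖v‖) : ‖P - Q‖ ≤ 3 * δ := by
  haveI : FiniteDimensional ℂ ↥(LinearMap.range (P : H →ₗ[ℂ] H)) := hkP.1
  haveI : FiniteDimensional ℂ ↥(LinearMap.range (Q : H →ₗ[ℂ] H)) := hkQ.1
  have hPv : ∀ v ∈ LinearMap.range (Q : H →ₗ[ℂ] H), (3:ℝ)/4 * ‖v‖ ^ 2 ≤ ‖P v‖ ^ 2 := by
    intro v hv
    have hp := proj_pythag P hP hP2 v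
    have hh := h v hv
    have h2 : ‖v - P v‖ ^ 2 ≤ (δ * ‖v‖) ^ 2 := by
      nlinarith [norm_nonneg (v - P v), norm_nonneg v]
    have hδ2 : δ ^ 2 ≤ 4⁻¹ := by nlinarith
    nlinarith [mul_le_mul_of_nonneg_right hδ2 (sq_nonneg ‖v‖)]
  let L : ↥(LinearMap.range (Q : H →ₗ[ℂ] H)) →ₗ[ℂ] ↥(LinearMap.range (P : H →ₗ[ℂ] H)) :=
    { toFun := fun v => ⟨P ↑v, LinearMap.mem_range_self (P : H →ₗ[ℂ] H) ↑v⟩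
      map_add' := fun v w => by ext; simp
      map_smul' := fun c v => by ext; simp }
  have hinj : Function.Injective L := by
    rw [injective_iff_map_eq_zero]
    intro v hv0
    have hval : P ↑v = 0 := congrArg Subtype.val hv0
    have h34 := hPv ↑v v.2
    rw [hval] at h34
    simp only [norm_zero] at h34
    have : ‖(↑v : H)‖ = 0 := by nlinarith [norm_nonneg (↑v : H)]
    exact Subtype.ext (norm_eq_zero.mp this)
  have hsur : Function.Surjective L :=
    (LinearMap.injective_iff_surjective_of_finrank_eq_finrank (by rw [hkQ.2, hkP.2])).mp hinj
  have key1 : ∀ x : H, ‖P x - Q (P x)‖ ≤ 2 * δ * ‖x‖ := by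
    intro x
    obtain ⟨v, hv⟩ := hsur ⟨P x, LinearMap.mem_range_self (P : H →ₗ[ℂ] H) x⟩
    have hvPx : P ↑v = P x := congrArg Subtype.val hv
    have hQv : Q ↑v = ↑v := proj_fix Q hQ2 v.2
    have e : P x - Q (P x) = (P ↑v - ↑v) - Q (P ↑v - ↑v) := by
      have h5 : (P ↑v - ↑v) - Q (P ↑v - ↑v) = P ↑v - Q (P ↑v) := by
        rw [map_sub, hQv]; abel
      rw [h5, hvPx]
    have hb1 : ‖P x - Q (P x)‖ ≤ ‖P ↑v - ↑v‖ := by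
      rw [e]; exact norm_sub_proj_le Q hQ hQ2 _
    have hb2 : ‖(↑v : H) - P ↑v‖ ≤ δ * ‖(↑v : H)‖ := h ↑v v.2
    have hb2' : ‖P ↑v - ↑v‖ ≤ δ * ‖(↑v : H)‖ := by rwa [norm_sub_rev]
    have hv34 := hPv ↑v v.2
    have hPvx : ‖P (↑v : H)‖ ≤ ‖x‖ := by rw [hvPx]; exact proj_norm_apply_le P hP hP2 x
    have hvx : ‖(↑v : H)‖ ≤ 2 * ‖x‖ := by
      nlinarith [norm_nonneg (↑v : H), norm_nonneg x, norm_nonneg (P (↑v : H))]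
    calc ‖P x - Q (P x)‖ ≤ δ * ‖(↑v : H)‖ := le_trans hb1 hb2'
    _ ≤ 2 * δ * ‖x‖ := by nlinarith
  have key2 : ∀ x : H, ‖Q x - P (Q x)‖ ≤ δ * ‖x‖ := by
    intro x
    have := h (Q x) (LinearMap.mem_range_self (Q : H →ₗ[ℂ] H) x)
    have hq := proj_norm_apply_le Q hQ hQ2 x
    nlinarith
  have hS : ‖(1 - Q) * P‖ ≤ 2 * δ := by
    apply ContinuousLinearMap.opNorm_le_bound _ (by positivity)
    intro x
    have := key1 x
    simpa [ContinuousLinearMap.mul_apply, ContinuousLinearMap.sub_apply] using this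
  have hT' : ‖(1 - P) * Q‖ ≤ δ := by
    apply ContinuousLinearMap.opNorm_le_bound _ hδ0
    intro x
    have := key2 x
    simpa [ContinuousLinearMap.mul_apply, ContinuousLinearMap.sub_apply] using this
  have hT : ‖Q * (1 - P)‖ ≤ δ := by
    have hstar : Q * (1 - P) = star ((1 - P) * Q) := by
      rw [star_mul, star_sub, star_one, hP, hQ]
    rw [hstar, norm_star]
    exact hT'
  have hPQ : P - Q = (1 - Q) * P - Q * (1 - P) := by noncomm_ring
  calc ‖P - Q‖ = ‖(1 - Q) * P - Q * (1 - P)‖ := by rw [← hPQ]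
  _ ≤ ‖(1 - Q) * P‖ + ‖Q * (1 - P)‖ := norm_sub_le _ _
  _ ≤ 2 * δ + δ := add_le_add hS hT
  _ = 3 * δ := by ring

theorem continuous_of_lsc {k : ℕ} (f : I01 → H →L[ℂ] H) (hf : IsLSCProjOp H f)
    (hrank : ∀ t, OpRank H (f t) k) : Continuous f := by
  rw [continuous_iff_continuousAt]
  intro t₀
  rw [ContinuousAt, Metric.tendsto_nhds]
  intro ε hε
  set δ : ℝ := min (ε / 6) 2⁻¹ with hδdef
  have hδ0 : 0 < δ := lt_min (by linarith) (by norm_num)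
  have hδh : δ ≤ 2⁻¹ := min_le_right _ _
  have hδε : δ ≤ ε / 6 := min_le_left _ _
  haveI : FiniteDimensional ℂ ↥(LinearMap.range (f t₀ : H →ₗ[ℂ] H)) := (hrank t₀).1
  set n := Module.finrank ℂ ↥(LinearMap.range (f t₀ : H →ₗ[ℂ] H)) with hn
  let b := stdOrthonormalBasis ℂ ↥(LinearMap.range (f t₀ : H →ₗ[ℂ] H))
  set ε' : ℝ := δ / (n + 1) with hε'
  have hε'0 : 0 < ε' := by positivity
  have hbnorm : ∀ i, ‖(↑(b i) : H)‖ = 1 := fun i => b.orthonormal.1 i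
  have hfix : ∀ i, f t₀ ↑(b i) = ↑(b i) := fun i => proj_fix (f t₀) ((hf.1 t₀).2) (b i).2
  have hval : ∀ i, 1 - ε' ^ 2 < (inner ℂ (f t₀ ↑(b i)) ↑(b i) : ℂ).re := by
    intro i
    rw [hfix i]
    have h1 : (inner ℂ (↑(b i) : H) ↑(b i) : ℂ).re = ‖(↑(b i) : H)‖ ^ 2 := by
      have := inner_self_eq_norm_sq (𝕜 := ℂ) ((↑(b i) : H))
      simpa using this
    rw [h1, hbnorm i]
    nlinarith
  have hev : ∀ᶠ t in nhds t₀, ∀ i, 1 - ε' ^ 2 < (inner ℂ (f t ↑(b i)) ↑(b i) : ℂ).re := by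
    rw [Filter.eventually_all]
    intro i
    exact hf.2 ↑(b i) t₀ _ (hval i)
  filter_upwards [hev] with t ht
  have hsat := hf.1 t
  have hsa : star (f t) = f t := hsat.1.star_eq
  have hsa0 : star (f t₀) = f t₀ := (hf.1 t₀).1.star_eq
  have hbi : ∀ i, ‖(↑(b i) : H) - f t ↑(b i)‖ ≤ ε' := by
    intro i
    have hp := proj_pythag (f t) hsa hsat.2 (↑(b i) : H)
    have hre := proj_re_inner (f t) hsa hsat.2 (↑(b i) : H)
    have hti := ht i
    rw [hbnorm i] at hp
    nlinarith [norm_nonneg ((↑(b i) : H) - f t ↑(b i))]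
  have hvbound : ∀ v ∈ LinearMap.range (f t₀ : H →ₗ[ℂ] H), ‖v - f t v‖ ≤ δ * ‖v‖ := by
    intro v hv
    set w : ↥(LinearMap.range (f t₀ : H →ₗ[ℂ] H)) := ⟨v, hv⟩ with hw
    have hrep := b.sum_repr' w
    have hcoe : v = ∑ i, (inner ℂ (↑(b i) : H) v : ℂ) • (↑(b i) : H) := by
      have h0 : ((∑ i, (inner ℂ (b i) w : ℂ) • b i : ↥(LinearMap.range (f t₀ : H →ₗ[ℂ] H))) : H) = v :=
        congrArg Subtype.val hrep
      have h1 : ((∑ i, (inner ℂ (b i) w : ℂ) • b i : ↥(LinearMap.range (f t₀ : H →ₗ[ℂ] H))) : H)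
          = ∑ i, (inner ℂ (↑(b i) : H) v : ℂ) • (↑(b i) : H) := by
        push_cast
        rfl
      exact h0.symm.trans h1
    have hsplit : v - f t v = ∑ i, (inner ℂ (↑(b i) : H) v : ℂ) • ((↑(b i) : H) - f t ↑(b i)) := by
      conv_lhs => rw [hcoe]
      rw [map_sum]
      rw [← Finset.sum_sub_distrib]
      congr 1
      ext i
      rw [map_smul, smul_sub]
    calc ‖v - f t v‖ = ‖∑ i, (inner ℂ (↑(b i) : H) v : ℂ) • ((↑(b i) : H) - f t ↑(b i))‖ := by
          rw [hsplit]
    _ ≤ ∑ i, ‖(inner ℂ (↑(b i) : H) v : ℂ) • ((↑(b i) : H) - f t ↑(b i))‖ := norm_sum_le _ _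
    _ ≤ ∑ _i : Fin n, ‖v‖ * ε' := by
        apply Finset.sum_le_sum
        intro i _
        rw [norm_smul]
        have h1 : ‖(inner ℂ (↑(b i) : H) v : ℂ)‖ ≤ ‖v‖ := by
          have := norm_inner_le_norm (𝕜 := ℂ) (↑(b i) : H) v
          rwa [hbnorm i, one_mul] at this
        exact mul_le_mul h1 (hbi i) (norm_nonneg _) (norm_nonneg _)
    _ = n * (‖v‖ * ε') := by rw [Finset.sum_const, Finset.card_univ, Fintype.card_fin]; simp
    _ ≤ (n + 1) * (‖v‖ * ε') := by
        have : (0:ℝ) ≤ ‖v‖ * ε' := by positivity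
        nlinarith
    _ = ‖v‖ * ((n + 1) * ε') := by ring
    _ = δ * ‖v‖ := by
        rw [hε', mul_div_cancel₀]
        · ring
        · positivity
  have hnorm := norm_sub_le_three (f t) (f t₀) hsa hsat.2 hsa0 ((hf.1 t₀).2)
    (hrank t) (hrank t₀) hδ0.le hδh hvbound
  rw [dist_eq_norm]
  calc ‖f t - f t₀‖ ≤ 3 * δ := hnorm
  _ < ε := by linarith

end ProjH

/-! ### Globalization over `[0,1]` and the main theorem -/

namespace ProjH

variable {H : Type*} [NormedAddCommGroup H] [InnerProductSpace ℂ H] [CompleteSpace H]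

/-- Ordered product of a family of operators. -/
def chain (W : ℕ → I01 → (H →L[ℂ] H)) : ℕ → I01 → (H →L[ℂ] H)
  | 0 => fun _ => 1
  | j + 1 => fun t => W j t * chain W j t

theorem stmt1_aux (k : ℕ) (f : I01 → H →L[ℂ] H) (hf : IsLSCProjOp H f)
    (hrank : ∀ t, OpRank H (f t) k) :
    ∃ (V : I01 → H →L[ℂ] H) (p : H →L[ℂ] H),
      Continuous V ∧ IsSelfAdjoint p ∧ p * p = p ∧ OpRank H p k ∧
      ∀ t, V t * ContinuousLinearMap.adjoint (V t) = p ∧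
        ContinuousLinearMap.adjoint (V t) * V t = f t := by
  classical
  have hcont : Continuous f := ProjH.continuous_of_lsc f hf hrank
  have hstar : ∀ s, star (f s) = f s := fun s => (hf.1 s).1.star_eq
  have hidem : ∀ s, f s * f s = f s := fun s => (hf.1 s).2
  have hu : UniformContinuous f := CompactSpace.uniformContinuous_of_continuous hcont
  rw [Metric.uniformContinuous_iff] at hu
  obtain ⟨δ, hδ0, hδ⟩ := hu 2⁻¹ (by norm_num)
  obtain ⟨N0, hN0⟩ := exists_nat_one_div_lt hδ0
  set N : ℕ := N0 + 1 with hNdef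
  have hN : (0:ℝ) < N := by positivity
  set r : ℕ → ℝ := fun j => (j : ℝ) / N with hrdef
  have hr0 : r 0 = 0 := by simp [hrdef]
  have hrN : r N = 1 := by
    rw [hrdef]
    exact div_self hN.ne'
  have hrnn : ∀ j, 0 ≤ r j := fun j => by rw [hrdef]; positivity
  have hrmono : ∀ j, r j ≤ r (j + 1) := by
    intro j
    rw [hrdef]
    simp only
    have hle : (j:ℝ) ≤ ((j+1 : ℕ) : ℝ) := by exact_mod_cast Nat.le_succ j
    gcongr
  have hrdiff : ∀ j, r (j + 1) - r j = 1 / N := by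
    intro j
    rw [hrdef]
    push_cast
    ring
  have hrle1 : ∀ j, j ≤ N → r j ≤ 1 := by
    intro j hj
    rw [hrdef, div_le_one hN]
    exact_mod_cast hj
  set c : ℕ → I01 := fun j => Set.projIcc 0 1 zero_le_one (r j) with hcdef
  set mid : ℕ → I01 → I01 :=
    fun j t => Set.projIcc 0 1 zero_le_one (max (r j) (min (↑t) (r (j+1)))) with hmiddef
  have hmem_r : ∀ j, j ≤ N → r j ∈ Set.Icc (0:ℝ) 1 := fun j hj => ⟨hrnn j, hrle1 j hj⟩
  have hmem_m : ∀ j, j < N → ∀ t : I01,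
      max (r j) (min (↑t) (r (j+1))) ∈ Set.Icc (0:ℝ) 1 := by
    intro j hj t
    constructor
    · exact le_trans (hrnn j) (le_max_left _ _)
    · exact max_le (hrle1 j hj.le) (le_trans (min_le_left _ _) t.2.2)
  have hc_coe : ∀ j, j ≤ N → ((c j : I01) : ℝ) = r j := by
    intro j hj
    rw [hcdef]
    simp only
    rw [Set.projIcc_of_mem zero_le_one (hmem_r j hj)]
  have hmid_coe : ∀ j, j < N → ∀ t : I01,
      ((mid j t : I01) : ℝ) = max (r j) (min (↑t) (r (j+1))) := by
    intro j hj t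
    rw [hmiddef]
    simp only
    rw [Set.projIcc_of_mem zero_le_one (hmem_m j hj t)]
  have hclose : ∀ j, j < N → ∀ t : I01, ‖f (c j) - f (mid j t)‖ ≤ 2⁻¹ := by
    intro j hj t
    have hd : dist (c j) (mid j t) < δ := by
      rw [Subtype.dist_eq, Real.dist_eq, hc_coe j hj.le, hmid_coe j hj t]
      have h1 : r j ≤ max (r j) (min (↑t) (r (j+1))) := le_max_left _ _
      have h2 : max (r j) (min (↑t) (r (j+1))) ≤ r (j+1) :=
        max_le (hrmono j) (le_trans (min_le_right _ _) le_rfl)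
      have h3 : |r j - max (r j) (min (↑t) (r (j+1)))| ≤ r (j+1) - r j := by
        rw [abs_sub_comm, abs_of_nonneg (by linarith)]
        linarith
      have h4 : r (j+1) - r j = 1 / N := hrdiff j
      have h5 : (1:ℝ) / N < δ := by
        rw [hNdef]
        push_cast
        exact hN0
      linarith
    have := hδ hd
    rw [dist_eq_norm] at this
    linarith
  set W : ℕ → I01 → (H →L[ℂ] H) :=
    fun j t => ProjU.uu (f (c j)) (f (mid j t)) with hWdef
  set g : ℕ → I01 → (H →L[ℂ] H) := ProjH.chain W with hgdef
  have hg0 : ∀ t, g 0 t = 1 := fun t => rfl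
  have hgs : ∀ j t, g (j+1) t = W j t * g j t := fun j t => rfl
  have main : ∀ j, j ≤ N → ∀ t : I01,
      (star (g j t) * g j t = 1 ∧ g j t * star (g j t) = 1) ∧
      g j t * f (c 0) * star (g j t)
        = f (Set.projIcc 0 1 zero_le_one (min (↑t) (r j))) := by
    intro j
    induction j with
    | zero =>
      intro _ t
      refine ⟨⟨by rw [hg0]; simp, by rw [hg0]; simp⟩, ?_⟩
      rw [hg0]
      simp only [one_mul, star_one, mul_one]
      have h1 : min ((↑t):ℝ) (r 0) = r 0 := by rw [hr0]; exact min_eq_right t.2.1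
      rw [h1, hcdef]
    | succ j ih =>
      intro hjN t
      have hjN' : j < N := Nat.lt_of_succ_le hjN
      obtain ⟨⟨IH1, IH2⟩, IH3⟩ := ih (Nat.le_of_succ_le hjN) t
      have hp := hstar (c j)
      have hp2 := hidem (c j)
      have hq := hstar (mid j t)
      have hq2 := hidem (mid j t)
      have hn := hclose j hjN' t
      have hWd : W j t = ProjU.uu (f (c j)) (f (mid j t)) := rfl
      have hW1 : star (W j t) * W j t = 1 := by
        rw [hWd]; exact ProjU.star_mul_uu hp hp2 hq hq2 hn
      have hW2 : W j t * star (W j t) = 1 := by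
        rw [hWd]; exact ProjU.uu_mul_star hp hp2 hq hq2 hn
      have hU1 : star (g (j+1) t) * g (j+1) t = 1 := by
        rw [hgs, star_mul]
        calc star (g j t) * star (W j t) * (W j t * g j t)
            = star (g j t) * (star (W j t) * W j t) * g j t := by noncomm_ring
        _ = star (g j t) * g j t := by rw [hW1, mul_one]
        _ = 1 := IH1
      have hU2 : g (j+1) t * star (g (j+1) t) = 1 := by
        rw [hgs, star_mul]
        calc W j t * g j t * (star (g j t) * star (W j t))
            = W j t * (g j t * star (g j t)) * star (W j t) := by noncomm_ring
        _ = W j t * star (W j t) := by rw [IH2, mul_one]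
        _ = 1 := hW2
      have hconj : g (j+1) t * f (c 0) * star (g (j+1) t)
          = W j t * f (Set.projIcc 0 1 zero_le_one (min (↑t) (r j))) * star (W j t) := by
        rw [hgs, star_mul]
        calc W j t * g j t * f (c 0) * (star (g j t) * star (W j t))
            = W j t * (g j t * f (c 0) * star (g j t)) * star (W j t) := by noncomm_ring
        _ = _ := by rw [IH3]
      refine ⟨⟨hU1, hU2⟩, ?_⟩
      rcases le_total ((↑t):ℝ) (r j) with hc1 | hc1
      · have h1 : min ((↑t):ℝ) (r (j+1)) = (↑t:ℝ) := min_eq_left (le_trans hc1 (hrmono j))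
        have h2 : max (r j) (min ((↑t):ℝ) (r (j+1))) = r j := by
          rw [h1]; exact max_eq_left hc1
        have hmid_eq : mid j t = c j := by
          rw [hmiddef, hcdef]
          simp only
          rw [h2]
        have hWone : W j t = 1 := by
          rw [hWd, hmid_eq]
          exact ProjU.uu_self hp2
        rw [hconj, hWone]
        simp only [one_mul, star_one, mul_one]
        have h3 : min ((↑t):ℝ) (r j) = (↑t:ℝ) := min_eq_left hc1
        rw [h3, h1]
      · have h1 : min ((↑t):ℝ) (r j) = r j := min_eq_right hc1
        have h2 : Set.projIcc (0:ℝ) 1 zero_le_one (min ((↑t):ℝ) (r j)) = c j := by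
          rw [h1, hcdef]
        have h3 : max (r j) (min ((↑t):ℝ) (r (j+1))) = min ((↑t):ℝ) (r (j+1)) :=
          max_eq_right (le_min hc1 (hrmono j))
        rw [hconj, h2]
        have hcj : W j t * f (c j) * star (W j t) = f (mid j t) := by
          rw [hWd]; exact ProjU.uu_conj hp hp2 hq hq2 hn
        rw [hcj]
        have h4 : mid j t = Set.projIcc 0 1 zero_le_one (min ((↑t):ℝ) (r (j+1))) := by
          rw [hmiddef]
          simp only
          rw [h3]
        rw [h4]
  have hgcont : ∀ j, j ≤ N → Continuous (g j) := by
    intro j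
    induction j with
    | zero =>
      intro _
      have : g 0 = fun _ => 1 := rfl
      rw [this]
      exact continuous_const
    | succ j ih =>
      intro hjN
      have hjN' : j < N := Nat.lt_of_succ_le hjN
      have hmidc : Continuous (mid j) := by
        rw [hmiddef]
        exact continuous_projIcc.comp
          (Continuous.max continuous_const (continuous_subtype_val.min continuous_const))
      have hWc : Continuous (W j) := by
        rw [hWdef]
        exact ProjU.continuous_uu (f (c j)) (hcont.comp hmidc) (fun t => hclose j hjN' t)
      have : g (j+1) = fun t => W j t * g j t := rfl
      rw [this]
      exact hWc.mul (ih (Nat.le_of_succ_le hjN))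
  refine ⟨fun t => f (c 0) * star (g N t), f (c 0), ?_,
    (hf.1 (c 0)).1, hidem (c 0), hrank (c 0), ?_⟩
  · exact continuous_const.mul ((hgcont N le_rfl).star)
  · intro t
    obtain ⟨⟨hU1, hU2⟩, hC⟩ := main N le_rfl t
    have hPstar : star (f (c 0)) = f (c 0) := hstar (c 0)
    have hVstar : star (f (c 0) * star (g N t)) = g N t * f (c 0) := by
      rw [star_mul, star_star, hPstar]
    have hft : f (Set.projIcc 0 1 zero_le_one (min (↑t) (r N))) = f t := by
      rw [hrN, min_eq_left t.2.2, Set.projIcc_val]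
    constructor
    · rw [← ContinuousLinearMap.star_eq_adjoint, hVstar]
      calc f (c 0) * star (g N t) * (g N t * f (c 0))
          = f (c 0) * (star (g N t) * g N t) * f (c 0) := by noncomm_ring
      _ = f (c 0) * f (c 0) := by rw [hU1, mul_one]
      _ = f (c 0) := hidem (c 0)
    · rw [← ContinuousLinearMap.star_eq_adjoint, hVstar]
      calc g N t * f (c 0) * (f (c 0) * star (g N t))
          = g N t * (f (c 0) * f (c 0)) * star (g N t) := by noncomm_ring
      _ = g N t * f (c 0) * star (g N t) := by rw [hidem (c 0)]
      _ = f t := by rw [hC, hft]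

end ProjH

/-- a lower semicontinuous projection-valued function on `[0,1]`
with values rank-`k` projections in `B(H)` is trivialized by a norm-continuous
family of partial isometries: `V(t)V(t)* = p` (a fixed rank-`k` projection) and
`V(t)*V(t) = f(t)`. -/
theorem stmt1 (H : Type*) [NormedAddCommGroup H] [InnerProductSpace ℂ H]
    [CompleteSpace H] [TopologicalSpace.SeparableSpace H]
    (hinf : ¬ FiniteDimensional ℂ H)
    (k : ℕ) (f : I01 → H →L[ℂ] H) (hf : IsLSCProjOp H f)
    (hrank : ∀ t, OpRank H (f t) k) :
    ∃ (V : I01 → H →L[ℂ] H) (p : H →L[ℂ] H),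
      Continuous V ∧ IsSelfAdjoint p ∧ p * p = p ∧ OpRank H p k ∧
      ∀ t, V t * ContinuousLinearMap.adjoint (V t) = p ∧
        ContinuousLinearMap.adjoint (V t) * V t = f t :=
  ProjH.stmt1_aux k f hf hrank
end
end

section
/- Let n ≥ 1 and k ≥ 0 be integers and let f : [0,1] → M_n(ℂ) be a lower semicontinuous projection-valued function such that every projection f(t) has rank exactly k. Then there exist a continuous function U : [0,1] → M_n(ℂ) whose values are unitary matrices and a projection p ∈ M_n(ℂ) of rank k such that U(t)·f(t)·U(t)* = p for all t ∈ [0,1]. -/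
noncomputable section
open scoped Matrix

namespace Stmt2Aux

open scoped Matrix.Norms.L2Operator ComplexOrder Topology
open Matrix Filter

variable {n : ℕ}

abbrev M (n : ℕ) := Matrix (Fin n) (Fin n) ℂ

lemma eq_zero_of_mulVec {A : M n} (h : ∀ v, A *ᵥ v = 0) : A = 0 := by
  ext i j
  have := congrFun (h (Pi.single j 1)) i
  rwa [Matrix.mulVec_single_one, Pi.zero_apply] at this

lemma herm_quad (A : M n) (w : Fin n → ℂ) :
    dotProduct (star w) ((Aᴴ * A) *ᵥ w) = dotProduct (star (A *ᵥ w)) (A *ᵥ w) := by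
  rw [← Matrix.mulVec_mulVec, Matrix.dotProduct_mulVec, Matrix.star_mulVec]

lemma dp_star_self (w : Fin n → ℂ) :
    dotProduct (star w) w = ((‖(WithLp.equiv 2 (Fin n → ℂ)).symm w‖^2 : ℝ) : ℂ) := by
  have := EuclideanSpace.inner_eq_star_dotProduct ((WithLp.equiv 2 (Fin n → ℂ)).symm w)
    ((WithLp.equiv 2 (Fin n → ℂ)).symm w)
  rw [inner_self_eq_norm_sq_to_K] at this
  rw [show ((WithLp.equiv 2 (Fin n → ℂ)).symm w).ofLp = w from rfl, dotProduct_comm] at this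
  rw [← this]
  norm_cast

/-- trace = rank for idempotent matrices. -/
lemma rank_cast_eq_trace {e : M n} (he : e * e = e) : (e.rank : ℂ) = e.trace := by
  have hproj : LinearMap.IsProj (LinearMap.range e.mulVecLin) e.mulVecLin := by
    refine ⟨fun x => ⟨x, rfl⟩, ?_⟩
    rintro x ⟨y, rfl⟩
    change (e.mulVecLin ∘ₗ e.mulVecLin) y = e.mulVecLin y
    rw [← Matrix.mulVecLin_mul, he]
  have h1 := hproj.trace
  rw [LinearMap.trace_eq_matrix_trace ℂ (Pi.basisFun ℂ (Fin n)),
    LinearMap.toMatrix_eq_toMatrix'] at h1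
  have h2 : LinearMap.toMatrix' e.mulVecLin = e := by
    rw [← Matrix.toLin'_apply']; exact LinearMap.toMatrix'_toLin' e
  rw [h2] at h1
  rw [Matrix.rank, h1]

lemma proj_posSemidef {e : M n} (he : eᴴ = e) (he2 : e * e = e) : e.PosSemidef := by
  have : e = eᴴ * e := by rw [he, he2]
  rw [this]
  exact Matrix.posSemidef_conjTranspose_mul_self e

/-- A projection dominated by a projection of no larger rank equals it. -/
lemma proj_eq_of_psd_sub {p q : M n} (hp : pᴴ = p) (hp2 : p * p = p)
    (hq : qᴴ = q) (hq2 : q * q = q) (hle : (p - q).PosSemidef)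
    (hrk : p.rank ≤ q.rank) : p = q := by
  have hq0 : ∀ v, q *ᵥ ((1 - p) *ᵥ v) = 0 := by
    intro v
    have hpw : p *ᵥ ((1 - p) *ᵥ v) = 0 := by
      rw [Matrix.mulVec_mulVec]
      have : p * (1 - p) = 0 := by rw [Matrix.mul_sub, mul_one, hp2, sub_self]
      rw [this, Matrix.zero_mulVec]
    have h2 : 0 ≤ dotProduct (star ((1 - p) *ᵥ v)) (q *ᵥ ((1 - p) *ᵥ v)) :=
      (proj_posSemidef hq hq2).dotProduct_mulVec_nonneg _
    have h1 : dotProduct (star ((1 - p) *ᵥ v)) (q *ᵥ ((1 - p) *ᵥ v)) ≤ 0 := by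
      have h0 := hle.dotProduct_mulVec_nonneg ((1 - p) *ᵥ v)
      have e1 : (p - q) *ᵥ ((1 - p) *ᵥ v) = p *ᵥ ((1 - p) *ᵥ v) - q *ᵥ ((1 - p) *ᵥ v) :=
        Matrix.sub_mulVec _ _ _
      rw [e1, dotProduct_sub, sub_nonneg, hpw, dotProduct_zero] at h0
      exact h0
    have h3 := le_antisymm h1 h2
    have h4 : (qᴴ * q) *ᵥ ((1 - p) *ᵥ v) = q *ᵥ ((1 - p) *ᵥ v) := by rw [hq, hq2]
    have h3' : dotProduct (star (q *ᵥ ((1 - p) *ᵥ v))) (q *ᵥ ((1 - p) *ᵥ v)) = 0 := by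
      rw [← herm_quad, h4]; exact h3
    exact dotProduct_star_self_eq_zero.mp h3' 
  have hq1p : q * (1 - p) = 0 := by
    apply eq_zero_of_mulVec
    intro v
    rw [← Matrix.mulVec_mulVec]
    exact hq0 v
  have hqp : q * p = q := by
    have := hq1p
    rw [Matrix.mul_sub, mul_one, sub_eq_zero] at this
    exact this.symm
  have hpq : p * q = q := by
    have := congrArg Matrix.conjTranspose hqp
    rwa [Matrix.conjTranspose_mul, hp, hq] at this
  have hrange : LinearMap.range q.mulVecLin ≤ LinearMap.range p.mulVecLin := by
    rintro x ⟨v, rfl⟩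
    refine ⟨q *ᵥ v, ?_⟩
    simp only [Matrix.mulVecLin_apply, Matrix.mulVec_mulVec, hpq]
  have hrange_eq : LinearMap.range q.mulVecLin = LinearMap.range p.mulVecLin :=
    Submodule.eq_of_le_of_finrank_le hrange hrk
  have hzero : ∀ v, (p - q) *ᵥ v = 0 := by
    intro v
    have hmem : (p - q) *ᵥ v ∈ LinearMap.range p.mulVecLin := by
      refine ⟨(p - q) *ᵥ v, ?_⟩
      simp only [Matrix.mulVecLin_apply, Matrix.mulVec_mulVec]
      rw [Matrix.mul_sub, hp2, hpq]
    rw [← hrange_eq] at hmem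
    obtain ⟨u, hu⟩ := hmem
    simp only [Matrix.mulVecLin_apply] at hu
    have hq2v : q *ᵥ ((p - q) *ᵥ v) = (p - q) *ᵥ v := by
      rw [← hu, Matrix.mulVec_mulVec, hq2]
    have : q * (p - q) = 0 := by rw [Matrix.mul_sub, hqp, hq2, sub_self]
    rw [Matrix.mulVec_mulVec, this, Matrix.zero_mulVec] at hq2v
    exact hq2v.symm
  have : p - q = 0 := eq_zero_of_mulVec hzero
  rwa [sub_eq_zero] at this


lemma posDef_one_sub_sq {d : M n} (hd : dᴴ = d) (hnorm : ‖d‖ < 1) :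
    (1 - d * d).PosDef := by
  apply Matrix.PosDef.of_dotProduct_mulVec_pos
  · unfold Matrix.IsHermitian
    rw [conjTranspose_sub, conjTranspose_one, conjTranspose_mul, hd]
  · intro x hx
    have e1 : (1 - d * d) *ᵥ x = x - (dᴴ * d) *ᵥ x := by
      rw [hd, Matrix.sub_mulVec, Matrix.one_mulVec]
    rw [e1, dotProduct_sub, herm_quad, dp_star_self, dp_star_self]
    rw [← Complex.ofReal_sub, Complex.zero_lt_real]
    have hb := Matrix.l2_opNorm_mulVec d ((WithLp.equiv 2 (Fin n → ℂ)).symm x)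
    have hxpos : 0 < ‖(WithLp.equiv 2 (Fin n → ℂ)).symm x‖ := by
      rw [norm_pos_iff]
      intro hcon
      exact hx (by simpa using congrArg (WithLp.equiv 2 (Fin n → ℂ)) hcon)
    have hb2 : ‖(WithLp.equiv 2 (Fin n → ℂ)).symm (d *ᵥ x)‖
        ≤ ‖d‖ * ‖(WithLp.equiv 2 (Fin n → ℂ)).symm x‖ := hb
    clear hb
    have hd0 : 0 ≤ ‖d‖ := norm_nonneg d
    have h5 := mul_self_le_mul_self (norm_nonneg ((WithLp.equiv 2 (Fin n → ℂ)).symm (d *ᵥ x))) hb2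
    have h6 : ‖d‖ * ‖d‖ < 1 := by nlinarith
    have h7 := mul_lt_mul_of_pos_right h6 (mul_pos hxpos hxpos)
    rw [one_mul] at h7
    nlinarith [h5, h7]

open scoped MatrixOrder in
open Classical in
/-- the positive semidefinite square root, as a total function -/
def msqrt (x : M n) : M n := if h : x.PosSemidef then CFC.sqrt x else 0

open scoped MatrixOrder in
lemma msqrt_posSemidef {x : M n} (hx : x.PosSemidef) : (msqrt x).PosSemidef := by
  classical rw [msqrt, dif_pos hx]; exact Matrix.nonneg_iff_posSemidef.mp (CFC.sqrt_nonneg x)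

open scoped MatrixOrder in
lemma msqrt_mul_self {x : M n} (hx : x.PosSemidef) : msqrt x * msqrt x = x := by
  classical rw [msqrt, dif_pos hx]; exact CFC.sqrt_mul_sqrt_self x hx.nonneg

open scoped MatrixOrder in
lemma msqrt_unique {x y : M n} (hx : x.PosSemidef) (hy : y.PosSemidef)
    (h : y * y = x) : y = msqrt x := by
  classical rw [msqrt, dif_pos hx]
  exact ((CFC.sqrt_eq_iff x y hx.nonneg hy.nonneg).mpr h).symm

lemma msqrt_one : msqrt (1 : M n) = 1 :=
  (msqrt_unique Matrix.PosSemidef.one Matrix.PosSemidef.one (one_mul 1)).symm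

lemma msqrt_herm {x : M n} (hx : x.PosSemidef) : (msqrt x)ᴴ = msqrt x :=
  (msqrt_posSemidef hx).1

lemma msqrt_commute {x q : M n} (hx : x.PosSemidef) (hq : qᴴ = q) (hq2 : q * q = q)
    (hcomm : x * q = q * x) : msqrt x * q = q * msqrt x := by
  set u : M n := (2:ℂ) • q - 1 with hu
  have huherm : uᴴ = u := by
    rw [hu, conjTranspose_sub, conjTranspose_smul, conjTranspose_one, hq]
    norm_num
  have husq : u * u = 1 := by
    rw [hu]
    simp only [sub_mul, mul_sub, smul_mul_assoc, mul_smul_comm, hq2, one_mul, mul_one, smul_smul]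
    module
  have hxu : x * u = u * x := by
    rw [hu, mul_sub, sub_mul, mul_one, one_mul, mul_smul_comm, smul_mul_assoc, hcomm]
  set s := msqrt x with hs
  have hy : (u * s * u).PosSemidef := by
    have := (msqrt_posSemidef hx).mul_mul_conjTranspose_same u
    rwa [huherm] at this
  have hysq : (u * s * u) * (u * s * u) = x := by
    have : u * s * (u * u) * s * u = u * (s * s) * u := by
      rw [husq, mul_one]
      noncomm_ring
    calc u * s * u * (u * s * u) = u * s * (u * u) * s * u := by noncomm_ring
    _ = u * (s * s) * u := this
    _ = u * x * u := by rw [msqrt_mul_self hx]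
    _ = x * (u * u) := by rw [← mul_assoc, ← hxu, mul_assoc]
    _ = x := by rw [husq, mul_one]
  have hyeq : u * s * u = s := msqrt_unique hx hy hysq
  have hus : u * s = s * u := by
    have := congrArg (fun z => z * u) hyeq
    simpa only [mul_assoc, husq, mul_one] using this
  -- now expand u = 2q - 1
  have h2 : (2:ℂ) • (q * s) - s = (2:ℂ) • (s * q) - s := by
    have := hus
    rw [hu, sub_mul, mul_sub, one_mul, mul_one, smul_mul_assoc, mul_smul_comm] at this
    exact this
  have h3 : (2:ℂ) • (q * s) = (2:ℂ) • (s * q) := by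
    have := congrArg (fun z => z + s) h2
    simpa using this
  have := smul_right_injective (M n) (two_ne_zero (α := ℂ)) h3
  rw [this]

def localA (p q : M n) : M n := p * q + (1 - p) * (1 - q)
def localU (p q : M n) : M n := localA p q * (msqrt (1 - (p - q) * (p - q)))⁻¹

section ringId
variable {p q : M n} (hp2 : p * p = p) (hq2 : q * q = q)

include hp2 hq2 in
lemma ringId1 : (q * p + (1 - q) * (1 - p)) * localA p q = 1 - (p - q) * (p - q) := by
  have hp2' : ∀ x : M n, p * (p * x) = p * x := fun x => by rw [← mul_assoc, hp2]
  have hq2' : ∀ x : M n, q * (q * x) = q * x := fun x => by rw [← mul_assoc, hq2]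
  simp only [localA, mul_add, add_mul, mul_sub, sub_mul, mul_one, one_mul, mul_assoc,
    hp2, hq2, hp2', hq2']
  abel

include hp2 hq2 in
lemma ringId2 : localA p q * q = p * localA p q := by
  have hp2' : ∀ x : M n, p * (p * x) = p * x := fun x => by rw [← mul_assoc, hp2]
  have hq2' : ∀ x : M n, q * (q * x) = q * x := fun x => by rw [← mul_assoc, hq2]
  simp only [localA, mul_add, add_mul, mul_sub, sub_mul, mul_one, one_mul, mul_assoc,
    hp2, hq2, hp2', hq2']
  abel

include hp2 hq2 in
lemma ringId3 : (1 - (p - q) * (p - q)) * q = q * (1 - (p - q) * (p - q)) := by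
  have hp2' : ∀ x : M n, p * (p * x) = p * x := fun x => by rw [← mul_assoc, hp2]
  have hq2' : ∀ x : M n, q * (q * x) = q * x := fun x => by rw [← mul_assoc, hq2]
  simp only [mul_add, add_mul, mul_sub, sub_mul, mul_one, one_mul, mul_assoc,
    hp2, hq2, hp2', hq2']
  abel
end ringId

lemma localA_conjTranspose {p q : M n} (hp : pᴴ = p) (hq : qᴴ = q) :
    (localA p q)ᴴ = q * p + (1 - q) * (1 - p) := by
  simp only [localA, conjTranspose_add, conjTranspose_mul, conjTranspose_sub,
    conjTranspose_one, hp, hq]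

lemma localU_spec {p q : M n} (hp : pᴴ = p) (hp2 : p * p = p) (hq : qᴴ = q)
    (hq2 : q * q = q) (hnorm : ‖p - q‖ < 1) :
    localU p q * (localU p q)ᴴ = 1 ∧ (localU p q)ᴴ * localU p q = 1 ∧
      localU p q * q * (localU p q)ᴴ = p := by
  have hdh : (p - q)ᴴ = p - q := by rw [conjTranspose_sub, hp, hq]
  have hbPD : (1 - (p - q) * (p - q)).PosDef := posDef_one_sub_sq hdh hnorm
  have hbPSD := hbPD.posSemidef
  set s := msqrt (1 - (p - q) * (p - q)) with hs
  have hs2 : s * s = 1 - (p - q) * (p - q) := msqrt_mul_self hbPSD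
  have hsherm : sᴴ = s := (msqrt_posSemidef hbPSD).1
  have hdet : IsUnit s.det := by
    have hdet2 : s.det * s.det = (1 - (p - q) * (p - q)).det := by rw [← det_mul, hs2]
    have hbdet : (1 - (p - q) * (p - q)).det ≠ 0 := by
      have := hbPD.det_pos
      intro hcon
      rw [hcon] at this
      exact lt_irrefl _ this
    rw [isUnit_iff_ne_zero]
    intro hcon
    rw [hcon, mul_zero] at hdet2
    exact hbdet hdet2.symm
  have hssinv : s * s⁻¹ = 1 := mul_nonsing_inv s hdet
  have hsinvs : s⁻¹ * s = 1 := nonsing_inv_mul s hdet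
  have hsq : s * q = q * s := msqrt_commute hbPSD hq hq2 (ringId3 hp2 hq2)
  have hsinvq : s⁻¹ * q = q * s⁻¹ := by
    calc s⁻¹ * q = s⁻¹ * q * (s * s⁻¹) := by rw [hssinv, mul_one]
    _ = s⁻¹ * (q * s) * s⁻¹ := by noncomm_ring
    _ = s⁻¹ * (s * q) * s⁻¹ := by rw [hsq]
    _ = (s⁻¹ * s) * (q * s⁻¹) := by noncomm_ring
    _ = q * s⁻¹ := by rw [hsinvs, one_mul]
  have hsinvh : (s⁻¹)ᴴ = s⁻¹ := by rw [conjTranspose_nonsing_inv, hsherm]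
  have huh : (localU p q)ᴴ = s⁻¹ * (localA p q)ᴴ := by
    rw [localU, conjTranspose_mul, hsinvh]
  have key : (localU p q)ᴴ * localU p q = 1 := by
    rw [huh, localU]
    calc s⁻¹ * (localA p q)ᴴ * (localA p q * s⁻¹)
        = s⁻¹ * ((localA p q)ᴴ * localA p q) * s⁻¹ := by noncomm_ring
    _ = s⁻¹ * (s * s) * s⁻¹ := by
        rw [localA_conjTranspose hp hq, ringId1 hp2 hq2, hs2]
    _ = (s⁻¹ * s) * (s * s⁻¹) := by noncomm_ring
    _ = 1 := by rw [hssinv, hsinvs, one_mul]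
  have key2 : localU p q * (localU p q)ᴴ = 1 := mul_eq_one_comm.mp key
  refine ⟨key2, key, ?_⟩
  have huq : localU p q * q = p * localU p q := by
    rw [localU]
    calc localA p q * s⁻¹ * q = localA p q * (s⁻¹ * q) := by rw [mul_assoc]
    _ = localA p q * (q * s⁻¹) := by rw [hsinvq]
    _ = (localA p q * q) * s⁻¹ := by rw [mul_assoc]
    _ = (p * localA p q) * s⁻¹ := by rw [ringId2 hp2 hq2]
    _ = p * (localA p q * s⁻¹) := by rw [mul_assoc]
  calc localU p q * q * (localU p q)ᴴ = p * localU p q * (localU p q)ᴴ := by rw [huq]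
  _ = p * (localU p q * (localU p q)ᴴ) := by rw [mul_assoc]
  _ = p := by rw [key2, mul_one]

lemma localU_self {p : M n} (hp2 : p * p = p) : localU p p = 1 := by
  have ha : localA p p = 1 := by
    simp only [localA, mul_sub, sub_mul, mul_one, one_mul, hp2]
    abel
  rw [localU, ha, sub_self, mul_zero, sub_zero, msqrt_one, inv_one, mul_one]

lemma norm_le_of_sq_le {a C : ℝ} (ha : 0 ≤ a) (hC : 1 ≤ C) (h : a * a ≤ C) : a ≤ C := by
  nlinarith [sq_nonneg (a - C)]

lemma posSemidef_of_tendsto {y : ℕ → M n} {L : M n} (hy : ∀ i, (y i).PosSemidef)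
    (hL : Tendsto y atTop (𝓝 L)) : L.PosSemidef := by
  apply Matrix.PosSemidef.of_dotProduct_mulVec_nonneg
  · have h1 : Tendsto (fun i => (y i)ᴴ) atTop (𝓝 Lᴴ) :=
      ((continuous_id.matrix_conjTranspose).tendsto L).comp hL
    have h2 : (fun i => (y i)ᴴ) = y := funext fun i => (hy i).1
    rw [h2] at h1
    exact tendsto_nhds_unique h1 hL
  · intro x
    have hcont : Continuous fun A : M n => dotProduct (star x) (A *ᵥ x) :=
      continuous_const.dotProduct (continuous_id.matrix_mulVec continuous_const)
    have htend : Tendsto (fun i => dotProduct (star x) (y i *ᵥ x)) atTop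
        (𝓝 (dotProduct (star x) (L *ᵥ x))) := (hcont.tendsto L).comp hL
    rw [Complex.nonneg_iff]
    constructor
    · apply ge_of_tendsto ((Complex.continuous_re.tendsto _).comp htend)
      filter_upwards with i using (Complex.nonneg_iff.mp ((hy i).dotProduct_mulVec_nonneg x)).1
    · have him : Tendsto (fun i => (dotProduct (star x) (y i *ᵥ x)).im) atTop
        (𝓝 ((dotProduct (star x) (L *ᵥ x)).im)) := (Complex.continuous_im.tendsto _).comp htend
      have hconst : (fun i => (dotProduct (star x) (y i *ᵥ x)).im) = fun _ => 0 :=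
        funext fun i => ((Complex.nonneg_iff.mp ((hy i).dotProduct_mulVec_nonneg x)).2).symm
      rw [hconst] at him
      exact tendsto_nhds_unique tendsto_const_nhds him

lemma continuous_msqrt_comp {g : I01 → M n} (hg : Continuous g)
    (hpsd : ∀ t, (g t).PosSemidef) : Continuous fun t => msqrt (g t) := by
  haveI : ProperSpace (M n) := FiniteDimensional.proper ℂ (M n)
  rw [continuous_iff_continuousAt]
  intro t
  apply Filter.tendsto_of_subseq_tendsto
  intro ns hns
  have hgns : Tendsto (fun i => g (ns i)) atTop (𝓝 (g t)) := (hg.tendsto t).comp hns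
  obtain ⟨R, hR⟩ := isBounded_iff_forall_norm_le.mp hgns.isCompact_insert_range.isBounded
  set C := max R 1 with hC
  have hC1 : (1:ℝ) ≤ C := le_max_right _ _
  have hyball : ∀ i, msqrt (g (ns i)) ∈ Metric.closedBall (0 : M n) C := by
    intro i
    rw [Metric.mem_closedBall, dist_zero_right]
    have hherm := (msqrt_posSemidef (hpsd (ns i))).1
    have hsq : ‖msqrt (g (ns i))‖ * ‖msqrt (g (ns i))‖ = ‖g (ns i)‖ := by
      have := CStarRing.norm_star_mul_self (x := msqrt (g (ns i)))
      rw [star_eq_conjTranspose, hherm, msqrt_mul_self (hpsd (ns i))] at this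
      exact this.symm
    refine norm_le_of_sq_le (norm_nonneg _) hC1 ?_
    rw [hsq]
    exact le_trans (hR _ (Set.mem_insert_iff.mpr (Or.inr ⟨i, rfl⟩))) (le_max_left _ _)
  obtain ⟨L, _, φ, hφ, hφtend⟩ :=
    (isCompact_closedBall (0 : M n) C).tendsto_subseq hyball
  have hLpsd : L.PosSemidef :=
    posSemidef_of_tendsto (fun i => msqrt_posSemidef (hpsd (ns (φ i)))) hφtend
  have hLsq : L * L = g t := by
    have h1 : Tendsto (fun i => msqrt (g (ns (φ i))) * msqrt (g (ns (φ i)))) atTop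
        (𝓝 (L * L)) := hφtend.mul hφtend
    have h2 : (fun i => msqrt (g (ns (φ i))) * msqrt (g (ns (φ i))))
        = fun i => g (ns (φ i)) := funext fun i => msqrt_mul_self (hpsd _)
    rw [h2] at h1
    exact tendsto_nhds_unique h1 (hgns.comp hφ.tendsto_atTop)
  have : L = msqrt (g t) := msqrt_unique (hpsd t) hLpsd hLsq
  rw [this] at hφtend
  exact ⟨φ, hφtend⟩

lemma msqrt_det_isUnit {x : M n} (hx : x.PosDef) : IsUnit (msqrt x).det := by
  have hs2 : msqrt x * msqrt x = x := msqrt_mul_self hx.posSemidef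
  have hdet2 : (msqrt x).det * (msqrt x).det = x.det := by rw [← det_mul, hs2]
  rw [isUnit_iff_ne_zero]
  intro hcon
  rw [hcon, mul_zero] at hdet2
  exact hx.det_pos.ne' hdet2.symm

lemma continuous_localU_comp {g h : I01 → M n} (hg : Continuous g) (hh : Continuous h)
    (hgp : ∀ t, (g t)ᴴ = g t) (hhp : ∀ t, (h t)ᴴ = h t)
    (hnorm : ∀ t, ‖g t - h t‖ < 1) :
    Continuous fun t => localU (g t) (h t) := by
  have hdh : ∀ t, (g t - h t)ᴴ = g t - h t := by
    intro t; rw [conjTranspose_sub, hgp, hhp]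
  have hbPD : ∀ t, (1 - (g t - h t) * (g t - h t)).PosDef :=
    fun t => posDef_one_sub_sq (hdh t) (hnorm t)
  have hbcont : Continuous fun t => 1 - (g t - h t) * (g t - h t) :=
    continuous_const.sub ((hg.sub hh).matrix_mul (hg.sub hh))
  have hscont : Continuous fun t => msqrt (1 - (g t - h t) * (g t - h t)) :=
    continuous_msqrt_comp hbcont (fun t => (hbPD t).posSemidef)
  have hinvcont : Continuous fun t => (msqrt (1 - (g t - h t) * (g t - h t)))⁻¹ := by
    rw [continuous_iff_continuousAt]
    intro t
    have hdet := msqrt_det_isUnit (hbPD t)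
    have h1 : ContinuousAt Inv.inv (msqrt (1 - (g t - h t) * (g t - h t))) := by
      apply continuousAt_matrix_inv
      have h2 : ContinuousAt Ring.inverse ((Units.mk0 _
          (isUnit_iff_ne_zero.mp hdet) : ℂˣ) : ℂ) := NormedRing.inverse_continuousAt _
      exact h2
    exact ContinuousAt.comp (g := Inv.inv)
      (f := fun t => msqrt (1 - (g t - h t) * (g t - h t))) h1 hscont.continuousAt
  have hAcont : Continuous fun t => localA (g t) (h t) := by
    unfold localA
    exact (hg.matrix_mul hh).add
      ((continuous_const.sub hg).matrix_mul (continuous_const.sub hh))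
  exact hAcont.matrix_mul hinvcont

lemma continuous_of_lsc_proj {k : ℕ} {f : I01 → M n} (hf : IsLSCProjMat n f)
    (hrank : ∀ t, (f t).rank = k) : Continuous f := by
  haveI : ProperSpace (M n) := FiniteDimensional.proper ℂ (M n)
  rw [continuous_iff_continuousAt]
  intro t
  apply Filter.tendsto_of_subseq_tendsto
  intro ns hns
  have hball : ∀ i, f (ns i) ∈ Metric.closedBall (0 : M n) 1 := by
    intro i
    rw [Metric.mem_closedBall, dist_zero_right]
    have hsq : ‖f (ns i)‖ * ‖f (ns i)‖ = ‖f (ns i)‖ := by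
      have := CStarRing.norm_star_mul_self (x := f (ns i))
      rw [star_eq_conjTranspose, (hf.1 (ns i)).1, (hf.1 (ns i)).2] at this
      exact this.symm
    nlinarith [norm_nonneg (f (ns i)), hsq]
  obtain ⟨L, _, φ, hφ, hφtend⟩ := (isCompact_closedBall (0 : M n) 1).tendsto_subseq hball
  have hnsφ : Tendsto (fun i => ns (φ i)) atTop (𝓝 t) := hns.comp hφ.tendsto_atTop
  -- L is hermitian
  have hLherm : Lᴴ = L := by
    have h1 : Tendsto (fun i => (f (ns (φ i)))ᴴ) atTop (𝓝 Lᴴ) :=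
      ((continuous_id.matrix_conjTranspose).tendsto L).comp hφtend
    have h2 : (fun i => (f (ns (φ i)))ᴴ) = fun i => f (ns (φ i)) :=
      funext fun i => (hf.1 _).1
    rw [h2] at h1
    exact tendsto_nhds_unique h1 hφtend
  -- L is idempotent
  have hLidem : L * L = L := by
    have h1 : Tendsto (fun i => f (ns (φ i)) * f (ns (φ i))) atTop (𝓝 (L * L)) :=
      hφtend.mul hφtend
    have h2 : (fun i => f (ns (φ i)) * f (ns (φ i))) = fun i => f (ns (φ i)) :=
      funext fun i => (hf.1 _).2
    rw [h2] at h1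
    exact tendsto_nhds_unique h1 hφtend
  -- rank L = k
  have hLrank : L.rank = k := by
    have h1 : Tendsto (fun i => (f (ns (φ i))).trace) atTop (𝓝 L.trace) :=
      ((continuous_id.matrix_trace).tendsto L).comp hφtend
    have h2 : (fun i => (f (ns (φ i))).trace) = fun _ => (k : ℂ) := by
      funext i
      rw [← rank_cast_eq_trace (hf.1 _).2, hrank]
    rw [h2] at h1
    have h3 : L.trace = (k : ℂ) := tendsto_nhds_unique h1 tendsto_const_nhds
    have h4 := rank_cast_eq_trace hLidem
    rw [h3] at h4
    exact_mod_cast h4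
  -- L - f t is PSD, using lower semicontinuity
  have hLge : (L - f t).PosSemidef := by
    apply Matrix.PosSemidef.of_dotProduct_mulVec_nonneg
    · unfold Matrix.IsHermitian
      rw [conjTranspose_sub, hLherm, (hf.1 t).1]
    · intro x
      have hcont : Continuous fun A : M n => dotProduct (star x) (A *ᵥ x) :=
        continuous_const.dotProduct (continuous_id.matrix_mulVec continuous_const)
      have htend : Tendsto (fun i => dotProduct (star x) (f (ns (φ i)) *ᵥ x)) atTop
          (𝓝 (dotProduct (star x) (L *ᵥ x))) := (hcont.tendsto L).comp hφtend
      have hLpsd : L.PosSemidef := proj_posSemidef hLherm hLidem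
      have hftpsd : (f t).PosSemidef := proj_posSemidef (hf.1 t).1 (hf.1 t).2
      have himL : (dotProduct (star x) (L *ᵥ x)).im = 0 :=
        (Complex.nonneg_iff.mp (hLpsd.dotProduct_mulVec_nonneg x)).2.symm
      have himft : (dotProduct (star x) (f t *ᵥ x)).im = 0 :=
        (Complex.nonneg_iff.mp (hftpsd.dotProduct_mulVec_nonneg x)).2.symm
      have hre : (dotProduct (star x) (f t *ᵥ x)).re
          ≤ (dotProduct (star x) (L *ᵥ x)).re := by
        set c := (dotProduct (star x) (L *ᵥ x)).re with hc
        set a := (dotProduct (star x) (f t *ᵥ x)).re with ha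
        by_contra hcon
        push_neg at hcon
        -- c < a; use LSC with y' = (c+a)/2
        have hlsc := hf.2 x t ((c + a) / 2) (by simp only [ha]; linarith)
        have hev : ∀ᶠ i in atTop, (c + a) / 2
            < (dotProduct (star x) (f (ns (φ i)) *ᵥ x)).re :=
          hnsφ.eventually hlsc
        have hrtend : Tendsto (fun i => (dotProduct (star x) (f (ns (φ i)) *ᵥ x)).re)
            atTop (𝓝 c) := (Complex.continuous_re.tendsto _).comp htend
        have : (c + a) / 2 ≤ c := ge_of_tendsto hrtend (hev.mono fun i h => h.le)
        linarith
      have : dotProduct (star x) ((L - f t) *ᵥ x)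
          = dotProduct (star x) (L *ᵥ x) - dotProduct (star x) (f t *ᵥ x) := by
        rw [Matrix.sub_mulVec, dotProduct_sub]
      rw [this, Complex.nonneg_iff]
      constructor
      · simp only [Complex.sub_re]; linarith
      · simp only [Complex.sub_im, himL, himft]; norm_num
  have hLf : L = f t := proj_eq_of_psd_sub hLherm hLidem (hf.1 t).1 (hf.1 t).2 hLge
    (by rw [hLrank, hrank])
  rw [hLf] at hφtend
  exact ⟨φ, hφtend⟩

theorem main (n k : ℕ) (f : I01 → Matrix (Fin n) (Fin n) ℂ)
    (hf : IsLSCProjMat n f) (hrank : ∀ t, (f t).rank = k) :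
    ∃ (U : I01 → Matrix (Fin n) (Fin n) ℂ) (p : Matrix (Fin n) (Fin n) ℂ),
      Continuous U ∧ (∀ t, U t * (U t)ᴴ = 1 ∧ (U t)ᴴ * U t = 1) ∧
      pᴴ = p ∧ p * p = p ∧ p.rank = k ∧
      ∀ t, U t * f t * (U t)ᴴ = p := by
  have hcont : Continuous f := continuous_of_lsc_proj hf hrank
  have h1 : UniformContinuous f := CompactSpace.uniformContinuous_of_continuous hcont
  rw [Metric.uniformContinuous_iff] at h1
  obtain ⟨δ, hδpos, hδ0⟩ := h1 1 one_pos
  have hδ : ∀ a b : I01, dist a b < δ → ‖f a - f b‖ < 1 := by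
    intro a b h
    have := hδ0 h
    rwa [dist_eq_norm] at this
  obtain ⟨m, hm⟩ := exists_nat_one_div_lt hδpos
  set m' : ℝ := (m : ℝ) + 1 with hm'
  have hm'pos : (0:ℝ) < m' := by positivity
  set c : ℕ → I01 := fun j => ⟨min ((j:ℝ) / m') 1,
    ⟨le_min (by positivity) zero_le_one, min_le_right _ _⟩⟩ with hc
  set mint : I01 → I01 → I01 := fun t s => ⟨min t.1 s.1,
    ⟨le_min t.2.1 s.2.1, le_trans (min_le_left _ _) t.2.2⟩⟩ with hmint
  set z : I01 := ⟨0, by norm_num⟩ with hz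
  have hcmono : ∀ j : ℕ, (c j).1 ≤ (c (j+1)).1 := by
    intro j
    apply min_le_min _ le_rfl
    apply div_le_div_of_nonneg_right (by push_cast; linarith) hm'pos.le
  have hcdiff : ∀ j : ℕ, (c (j+1)).1 - (c j).1 ≤ 1 / m' := by
    intro j
    have hab : ((j:ℝ)+1) / m' - (j:ℝ) / m' = 1 / m' := by field_simp; ring
    have hcast : (((j+1:ℕ)):ℝ) / m' = ((j:ℝ)+1) / m' := by push_cast; ring
    simp only [hc, hcast]
    rcases le_total (((j:ℝ)+1) / m') 1 with hb | hb
    · have ha : (j:ℝ) / m' ≤ 1 := le_trans (by apply div_le_div_of_nonneg_right (by linarith) hm'pos.le) hb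
      rw [min_eq_left hb, min_eq_left ha]
      linarith
    · rw [min_eq_right hb]
      rcases le_total ((j:ℝ) / m') 1 with ha | ha
      · rw [min_eq_left ha]
        linarith
      · rw [min_eq_right ha]
        have : (0:ℝ) ≤ 1/m' := by positivity
        linarith
  have key : ∀ j : ℕ, ∃ W : I01 → M n, Continuous W ∧
      (∀ t, W t * (W t)ᴴ = 1 ∧ (W t)ᴴ * W t = 1) ∧
      (∀ t, W t * f z * (W t)ᴴ = f (mint t (c j))) := by
    intro j
    induction j with
    | zero =>
      refine ⟨fun _ => 1, continuous_const, fun t => by simp, fun t => ?_⟩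
      have h0 : mint t (c 0) = z := by
        apply Subtype.ext
        simp only [hmint, hc, hz]
        norm_num
        exact t.2.1
      rw [h0]
      simp
    | succ j ih =>
      obtain ⟨W, hWc, hWu, hWconj⟩ := ih
      set r : I01 → I01 := fun t => ⟨max (c j).1 (min t.1 (c (j+1)).1),
        ⟨le_trans (c j).2.1 (le_max_left _ _),
         max_le (c j).2.2 (le_trans (min_le_right _ _) (c (j+1)).2.2)⟩⟩ with hr
      have hrcont : Continuous r :=
        Continuous.subtype_mk (continuous_const.max (continuous_subtype_val.min continuous_const)) _
      have hrange : ∀ t, (c j).1 ≤ (r t).1 ∧ (r t).1 ≤ (c (j+1)).1 := by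
        intro t
        exact ⟨le_max_left _ _, max_le (hcmono j) (min_le_right _ _)⟩
      have hsmall : ∀ t, ‖f (r t) - f (c j)‖ < 1 := by
        intro t
        apply hδ
        rw [Subtype.dist_eq, Real.dist_eq,
          abs_of_nonneg (by linarith [(hrange t).1] : (0:ℝ) ≤ (r t).1 - (c j).1)]
        have h2 := (hrange t).2
        have h3 := hcdiff j
        have h4 : 1 / m' < δ := by
          rw [hm']
          exact hm
        linarith
      set u : I01 → M n := fun t => localU (f (r t)) (f (c j)) with hu
      have hucont : Continuous u :=
        continuous_localU_comp (hcont.comp hrcont) continuous_const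
          (fun t => (hf.1 _).1) (fun t => (hf.1 (c j)).1) hsmall
      have huspec : ∀ t, u t * (u t)ᴴ = 1 ∧ (u t)ᴴ * u t = 1 ∧
          u t * f (c j) * (u t)ᴴ = f (r t) :=
        fun t => localU_spec (hf.1 _).1 (hf.1 _).2 (hf.1 _).1 (hf.1 _).2 (hsmall t)
      refine ⟨fun t => u t * W t, hucont.matrix_mul hWc, fun t => ⟨?_, ?_⟩, fun t => ?_⟩
      · calc u t * W t * (u t * W t)ᴴ = u t * (W t * (W t)ᴴ) * (u t)ᴴ := by
              rw [conjTranspose_mul]; noncomm_ring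
        _ = 1 := by rw [(hWu t).1, mul_one, (huspec t).1]
      · calc (u t * W t)ᴴ * (u t * W t) = (W t)ᴴ * ((u t)ᴴ * u t) * W t := by
              rw [conjTranspose_mul]; noncomm_ring
        _ = 1 := by rw [(huspec t).2.1, mul_one, (hWu t).2]
      · have hmid : (u t * W t) * f z * (u t * W t)ᴴ
            = u t * (W t * f z * (W t)ᴴ) * (u t)ᴴ := by
          rw [conjTranspose_mul]; noncomm_ring
        rw [hmid, hWconj t]
        rcases le_total t.1 (c j).1 with hle | hge
        · have hrt : r t = c j := by
            apply Subtype.ext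
            exact max_eq_left (le_trans (min_le_left _ _) hle)
          have hm1 : mint t (c j) = t := Subtype.ext (min_eq_left hle)
          have hm2 : mint t (c (j+1)) = t := Subtype.ext (min_eq_left (le_trans hle (hcmono j)))
          have hu1 : u t = 1 := by
            rw [hu]
            simp only []
            rw [hrt]
            exact localU_self (hf.1 (c j)).2
          rw [hm1, hm2, hu1]
          simp
        · have hm1 : mint t (c j) = c j := Subtype.ext (min_eq_right hge)
          have hm2 : mint t (c (j+1)) = r t := by
            apply Subtype.ext
            exact (max_eq_right (le_min hge (hcmono j))).symm
          rw [hm1, hm2]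
          exact (huspec t).2.2
  obtain ⟨W, hWc, hWu, hWconj⟩ := key (m + 1)
  have hc1 : (c (m+1)).1 = 1 := by
    simp only [hc]
    rw [min_eq_right]
    rw [show (((m+1:ℕ)):ℝ) = m' by rw [hm']; push_cast; ring]
    rw [div_self hm'pos.ne']
  have hWt : ∀ t, W t * f z * (W t)ᴴ = f t := by
    intro t
    rw [hWconj t]
    have hmm : mint t (c (m+1)) = t := by
      apply Subtype.ext
      show min t.1 (c (m+1)).1 = t.1
      rw [hc1]
      exact min_eq_left t.2.2
    rw [hmm]
  refine ⟨fun t => (W t)ᴴ, f z, hWc.matrix_conjTranspose, fun t => ⟨?_, ?_⟩,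
    (hf.1 z).1, (hf.1 z).2, hrank z, fun t => ?_⟩
  · rw [conjTranspose_conjTranspose]
    exact (hWu t).2
  · rw [conjTranspose_conjTranspose]
    exact (hWu t).1
  · rw [conjTranspose_conjTranspose]
    calc (W t)ᴴ * f t * W t = (W t)ᴴ * (W t * f z * (W t)ᴴ) * W t := by rw [hWt t]
    _ = ((W t)ᴴ * W t) * f z * ((W t)ᴴ * W t) := by noncomm_ring
    _ = f z := by rw [(hWu t).2, one_mul, mul_one]

end Stmt2Aux

/-- a lower semicontinuous projection-valued function on `[0,1]`
with values rank-`k` projections in `Mₙ(ℂ)` is unitarily trivializable: there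
are a continuous unitary-valued `U` and a rank-`k` projection `p` with
`U(t) f(t) U(t)* = p` for all `t`. -/
theorem stmt2 (n k : ℕ) (hn : 1 ≤ n) (f : I01 → Matrix (Fin n) (Fin n) ℂ)
    (hf : IsLSCProjMat n f) (hrank : ∀ t, (f t).rank = k) :
    ∃ (U : I01 → Matrix (Fin n) (Fin n) ℂ) (p : Matrix (Fin n) (Fin n) ℂ),
      Continuous U ∧ (∀ t, U t * (U t)ᴴ = 1 ∧ (U t)ᴴ * U t = 1) ∧
      pᴴ = p ∧ p * p = p ∧ p.rank = k ∧
      ∀ t, U t * f t * (U t)ᴴ = p := by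
  exact Stmt2Aux.main n k f hf hrank
end
end

section
/- Let A be a C*-algebra and a ∈ A. Let H₁ denote the topological closure in A of the set {(a*·a)·x·(a*·a) : x ∈ A} and H₂ the topological closure of {(a·a*)·x·(a·a*) : x ∈ A}. Then H₁ and H₂ are closed *-subalgebras of A and there exists an isometric *-isomorphism from H₁ onto H₂. (H₁ and H₂ are the hereditary sub-C*-algebras of A generated by a*a and by aa*, respectively.) -/
open Filter Topology

section aux
variable {A : Type*} [NonUnitalCStarAlgebra A]

private lemma qs_nonneg (a : A) : ∀ x ∈ quasispectrum ℝ (star a * a), 0 ≤ x := by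
  intro x hx
  rw [Unitization.quasispectrum_eq_spectrum_inr' ℝ ℂ] at hx
  have h : ((star a * a : A) : Unitization ℂ A)
      = star (a : Unitization ℂ A) * (a : Unitization ℂ A) := by simp
  rw [h] at hx
  exact spectrum_star_mul_self_nonneg x hx

private noncomputable def bb (a : A) : A := cfcₙ Real.sqrt (star a * a)

private lemma bb_sa (a : A) : IsSelfAdjoint (bb a) := cfcₙ_predicate _ _

private lemma bb_mul_self (a : A) : bb a * bb a = star a * a := by
  rw [bb, ← cfcₙ_mul ..]
  have h1 : (quasispectrum ℝ (star a * a)).EqOn (fun x => Real.sqrt x * Real.sqrt x) id :=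
    fun x hx => Real.mul_self_sqrt (qs_nonneg a x hx)
  rw [cfcₙ_congr h1]
  exact cfcₙ_id ℝ _

/-- the approximating functions -/
private noncomputable def ff (n : ℕ) : ℝ → ℝ := fun t => t^4 / (t^4 + ((n:ℝ)+1)⁻¹)
private noncomputable def kk (n : ℕ) : ℝ → ℝ :=
  fun t => Real.sqrt t * t^3 / (t^4 + ((n:ℝ)+1)⁻¹)
private noncomputable def ss (n : ℕ) : ℝ → ℝ := fun t => t^2 / (t^4 + ((n:ℝ)+1)⁻¹)

private lemma denom_pos (n : ℕ) (t : ℝ) : 0 < t^4 + ((n:ℝ)+1)⁻¹ := by positivity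

private lemma ff_cont (n : ℕ) : Continuous (ff n) := by
  apply Continuous.div (by fun_prop) (by fun_prop)
  exact fun t => (denom_pos n t).ne'

private lemma kk_cont (n : ℕ) : Continuous (kk n) := by
  apply Continuous.div (by fun_prop) (by fun_prop)
  exact fun t => (denom_pos n t).ne'

private lemma ss_cont (n : ℕ) : Continuous (ss n) := by
  apply Continuous.div (by fun_prop) (by fun_prop)
  exact fun t => (denom_pos n t).ne'

private lemma ff_zero (n : ℕ) : ff n 0 = 0 := by simp [ff]
private lemma kk_zero (n : ℕ) : kk n 0 = 0 := by simp [kk]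
private lemma ss_zero (n : ℕ) : ss n 0 = 0 := by simp [ss]

private lemma ff_nonneg (n : ℕ) (t : ℝ) : 0 ≤ ff n t := by
  exact div_nonneg (by positivity) (denom_pos n t).le

private lemma ff_le_one (n : ℕ) (t : ℝ) : ff n t ≤ 1 := by
  rw [ff, div_le_one (denom_pos n t)]
  have : (0:ℝ) ≤ ((n:ℝ)+1)⁻¹ := by positivity
  linarith

private noncomputable def KK (a : A) (n : ℕ) : A := cfcₙ (kk n) (star a * a)
private noncomputable def uu (a : A) (n : ℕ) : A := cfcₙ (ff n) (star a * a)
private noncomputable def vv (a : A) (n : ℕ) : A := cfcₙ (ss n) (star a * a)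

private lemma KK_sa (a : A) (n : ℕ) : IsSelfAdjoint (KK a n) := cfcₙ_predicate _ _
private lemma uu_sa (a : A) (n : ℕ) : IsSelfAdjoint (uu a n) := cfcₙ_predicate _ _

private lemma KK_comm_bb (a : A) (n : ℕ) : KK a n * bb a = bb a * KK a n :=
  (cfcₙ_commute_cfcₙ (kk n) Real.sqrt (star a * a)).eq

private lemma uu_eq (a : A) (n : ℕ) : uu a n = bb a * KK a n := by
  have h : (quasispectrum ℝ (star a * a)).EqOn (ff n) (fun t => Real.sqrt t * kk n t) := by
    intro t ht
    have hts : Real.sqrt t * Real.sqrt t = t := Real.mul_self_sqrt (qs_nonneg a t ht)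
    simp only [ff, kk]
    rw [← mul_div_assoc, ← mul_assoc, hts]
    ring_nf
  rw [uu, cfcₙ_congr h,
    cfcₙ_mul Real.sqrt (kk n) (star a * a) (by fun_prop) (by simp)
      ((kk_cont n).continuousOn) (kk_zero n)]
  rfl

private lemma uu_eq' (a : A) (n : ℕ) : uu a n = KK a n * bb a := by
  rw [uu_eq, KK_comm_bb]

private lemma uu_eq_vv (a : A) (n : ℕ) :
    uu a n = (star a * a) * vv a n * (star a * a) := by
  have h : ff n = fun t => (t * ss n t) * t := by
    funext t
    have hne : ((n:ℝ)+1) ≠ 0 := by positivity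
    have hd := (denom_pos n t).ne'
    simp only [ff, ss]
    field_simp
  rw [uu, h,
    cfcₙ_mul (fun t => t * ss n t) (fun t => t) (star a * a)
      ((continuous_id.mul (ss_cont n)).continuousOn) (by simp [ss_zero])
      (by fun_prop) rfl,
    cfcₙ_mul (fun t : ℝ => t) (ss n) (star a * a) (by fun_prop) rfl
      ((ss_cont n).continuousOn) (ss_zero n),
    cfcₙ_id' ℝ (star a * a)]
  rfl

private noncomputable def epsn (n : ℕ) : ℝ := Real.sqrt (Real.sqrt ((n:ℝ)+1)⁻¹)

private lemma epsn_nonneg (n : ℕ) : 0 ≤ epsn n := Real.sqrt_nonneg _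

private lemma epsn_pow : ∀ n : ℕ, (epsn n)^4 = ((n:ℝ)+1)⁻¹ := by
  intro n
  have h1 : (0:ℝ) ≤ ((n:ℝ)+1)⁻¹ := by positivity
  have h2 : (epsn n)^2 = Real.sqrt ((n:ℝ)+1)⁻¹ := Real.sq_sqrt (Real.sqrt_nonneg _)
  calc (epsn n)^4 = ((epsn n)^2)^2 := by ring
  _ = ((n:ℝ)+1)⁻¹ := by rw [h2]; exact Real.sq_sqrt h1

private lemma key_pt (n : ℕ) (t : ℝ) (ht : 0 ≤ t) : t - ff n t * t ≤ epsn n := by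
  have hcpos : (0:ℝ) < ((n:ℝ)+1)⁻¹ := by positivity
  have hd : (0:ℝ) < t^4 + ((n:ℝ)+1)⁻¹ := denom_pos n t
  have h1 : t - ff n t * t = t * ((n:ℝ)+1)⁻¹ / (t^4 + ((n:ℝ)+1)⁻¹) := by
    have hne := hd.ne'
    rw [ff]
    field_simp
    ring
  rw [h1, div_le_iff₀ hd]
  set m := epsn n with hm
  have hm0 : 0 ≤ m := epsn_nonneg n
  have hm4 : m^4 = ((n:ℝ)+1)⁻¹ := epsn_pow n
  rcases le_total t m with h | h
  · nlinarith [mul_le_mul_of_nonneg_right h hcpos.le, mul_nonneg hm0 (pow_nonneg ht 4)]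
  · nlinarith [mul_nonneg (mul_nonneg ht hm0) (sub_nonneg.mpr (pow_le_pow_left₀ hm0 h 3)),
      mul_nonneg hm0 (pow_nonneg ht 4)]

private lemma key_pt' (n : ℕ) (t : ℝ) (ht : 0 ≤ t) : 0 ≤ t - ff n t * t := by
  nlinarith [ff_le_one n t]

private lemma E1 (a : A) (n : ℕ) : ‖uu a n‖ ≤ 1 := by
  apply norm_cfcₙ_le
  intro t _
  rw [Real.norm_eq_abs, abs_of_nonneg (ff_nonneg n t)]
  exact ff_le_one n t

private lemma cfc_mul_right (a : A) (n : ℕ) :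
    uu a n * (star a * a) = cfcₙ (fun t => ff n t * t) (star a * a) := by
  rw [cfcₙ_mul (ff n) (fun t => t) (star a * a) ((ff_cont n).continuousOn) (ff_zero n)
    (by fun_prop) rfl, cfcₙ_id' ℝ (star a * a)]
  rfl

private lemma cfc_mul_left (a : A) (n : ℕ) :
    (star a * a) * uu a n = cfcₙ (fun t => t * ff n t) (star a * a) := by
  rw [cfcₙ_mul (fun t : ℝ => t) (ff n) (star a * a) (by fun_prop) rfl
    ((ff_cont n).continuousOn) (ff_zero n), cfcₙ_id' ℝ (star a * a)]
  rfl

private lemma E2 (a : A) (n : ℕ) :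
    ‖uu a n * (star a * a) - star a * a‖ ≤ epsn n := by
  have h : uu a n * (star a * a) - star a * a
      = cfcₙ (fun t => ff n t * t - t) (star a * a) := by
    conv_lhs => rw [cfc_mul_right a n]
    nth_rewrite 2 [← cfcₙ_id' ℝ (star a * a)]
    rw [← cfcₙ_sub (fun t => ff n t * t) (fun t => t) (star a * a)
      (((ff_cont n).mul continuous_id).continuousOn) (by simp [ff_zero]) (by fun_prop) rfl]
  rw [h]
  apply norm_cfcₙ_le
  intro t ht
  have ht0 := qs_nonneg a t ht
  rw [Real.norm_eq_abs, abs_sub_comm, abs_of_nonneg (key_pt' n t ht0)]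
  exact key_pt n t ht0

private lemma E3 (a : A) (n : ℕ) : ‖a * uu a n - a‖ ≤ Real.sqrt (epsn n) := by
  have cf := ff_cont n
  have hstar : star (a * uu a n - a) = uu a n * star a - star a := by
    rw [star_sub, star_mul, (uu_sa a n).star_eq]
  have c3 : uu a n * (star a * a) * uu a n
      = cfcₙ (fun t => ff n t * t * ff n t) (star a * a) := by
    rw [cfc_mul_right a n, uu,
      ← cfcₙ_mul (fun t => ff n t * t) (ff n) (star a * a)
        ((cf.mul continuous_id).continuousOn) (by simp [ff_zero])
        (cf.continuousOn) (ff_zero n)]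
  have hmul : star (a * uu a n - a) * (a * uu a n - a)
      = cfcₙ (fun t => (ff n t * t * ff n t - ff n t * t) - (t * ff n t - t)) (star a * a) := by
    rw [hstar]
    have expand : (uu a n * star a - star a) * (a * uu a n - a)
        = (uu a n * (star a * a) * uu a n - uu a n * (star a * a))
          - ((star a * a) * uu a n - star a * a) := by
      noncomm_ring
    rw [expand, c3, cfc_mul_right a n, cfc_mul_left a n]
    nth_rewrite 4 [← cfcₙ_id' ℝ (star a * a)]
    rw [← cfcₙ_sub (fun t => ff n t * t * ff n t) (fun t => ff n t * t) (star a * a)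
        (((cf.mul continuous_id).mul cf).continuousOn) (by simp [ff_zero])
        ((cf.mul continuous_id).continuousOn) (by simp [ff_zero]),
      ← cfcₙ_sub (fun t => t * ff n t) (fun t => t) (star a * a)
        ((continuous_id.mul cf).continuousOn) (by simp [ff_zero]) (by fun_prop) rfl,
      ← cfcₙ_sub (fun t => ff n t * t * ff n t - ff n t * t) (fun t => t * ff n t - t)
        (star a * a)
        ((((cf.mul continuous_id).mul cf).sub (cf.mul continuous_id)).continuousOn)
        (by simp [ff_zero])
        (((continuous_id.mul cf).sub continuous_id).continuousOn) (by simp [ff_zero])]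
  have hb : ‖star (a * uu a n - a) * (a * uu a n - a)‖ ≤ epsn n := by
    rw [hmul]
    apply norm_cfcₙ_le
    intro t ht
    have ht0 := qs_nonneg a t ht
    have h1 : (ff n t * t * ff n t - ff n t * t) - (t * ff n t - t)
        = (t - ff n t * t) * (1 - ff n t) := by ring
    have h2 : 0 ≤ 1 - ff n t := by linarith [ff_le_one n t]
    have h3 : 1 - ff n t ≤ 1 := by linarith [ff_nonneg n t]
    have h4 := key_pt' n t ht0
    have h5 := key_pt n t ht0
    rw [Real.norm_eq_abs, h1, abs_of_nonneg (by positivity)]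
    nlinarith
  have hsq : ‖a * uu a n - a‖ * ‖a * uu a n - a‖ ≤ epsn n := by
    rw [← CStarRing.norm_star_mul_self]; exact hb
  have h6 := Real.sq_sqrt (epsn_nonneg n)
  nlinarith [norm_nonneg (a * uu a n - a), Real.sqrt_nonneg (epsn n),
    sq_nonneg (‖a * uu a n - a‖ - Real.sqrt (epsn n))]
private lemma epsn_tendsto : Filter.Tendsto epsn Filter.atTop (nhds 0) := by
  have h1 : Filter.Tendsto (fun n : ℕ => ((n:ℝ)+1)⁻¹) Filter.atTop (nhds 0) := by
    simpa [one_div] using tendsto_one_div_add_atTop_nhds_zero_nat (𝕜 := ℝ)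
  have hs : Filter.Tendsto Real.sqrt (nhds 0) (nhds 0) :=
    Real.continuous_sqrt.tendsto' 0 0 (by simp)
  exact hs.comp (hs.comp h1)

private lemma sqrt_epsn_tendsto :
    Filter.Tendsto (fun n => Real.sqrt (epsn n)) Filter.atTop (nhds 0) := by
  have hs : Filter.Tendsto Real.sqrt (nhds 0) (nhds 0) :=
    Real.continuous_sqrt.tendsto' 0 0 (by simp)
  exact hs.comp epsn_tendsto

private lemma tendsto_a_uu (a : A) :
    Filter.Tendsto (fun n => a * uu a n) Filter.atTop (nhds a) := by
  rw [tendsto_iff_dist_tendsto_zero]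
  apply squeeze_zero (fun n => dist_nonneg) (fun n => ?_) sqrt_epsn_tendsto
  rw [dist_eq_norm]
  exact E3 a n

private lemma tendsto_uu_sa (a : A) :
    Filter.Tendsto (fun n => uu a n * star a) Filter.atTop (nhds (star a)) := by
  rw [tendsto_iff_dist_tendsto_zero]
  apply squeeze_zero (fun n => dist_nonneg) (fun n => ?_) sqrt_epsn_tendsto
  rw [dist_eq_norm]
  have h : uu a n * star a - star a = star (a * uu a n - a) := by
    rw [star_sub, star_mul, (uu_sa a n).star_eq]
  rw [h, norm_star]
  exact E3 a n

private lemma norm_a_mul (a c : A) : ‖a * c‖ = ‖bb a * c‖ := by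
  have h1 : star (a * c) * (a * c) = star c * (star a * a) * c := by
    rw [star_mul]; noncomm_ring
  have h2 : star (bb a * c) * (bb a * c) = star c * (bb a * bb a) * c := by
    rw [star_mul, (bb_sa a).star_eq]; noncomm_ring
  have h3 : ‖a * c‖ * ‖a * c‖ = ‖bb a * c‖ * ‖bb a * c‖ := by
    rw [← CStarRing.norm_star_mul_self, ← CStarRing.norm_star_mul_self, h1, h2, bb_mul_self]
  exact (mul_self_inj_of_nonneg (norm_nonneg _) (norm_nonneg _)).mp h3

private lemma norm_mul_sa (a c : A) : ‖c * star a‖ = ‖c * bb a‖ := by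
  calc ‖c * star a‖ = ‖star (c * star a)‖ := (norm_star _).symm
  _ = ‖a * star c‖ := by rw [star_mul, star_star]
  _ = ‖bb a * star c‖ := norm_a_mul a (star c)
  _ = ‖star (bb a * star c)‖ := (norm_star _).symm
  _ = ‖c * bb a‖ := by rw [star_mul, star_star, (bb_sa a).star_eq]

/-- the map on the dense part and the corresponding "identity" map -/
private noncomputable def TT (a x : A) : A := a * bb a * x * bb a * star a
private noncomputable def PP (a x : A) : A := (star a * a) * x * (star a * a)

private lemma norm_TT (a x : A) : ‖TT a x‖ = ‖PP a x‖ := by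
  rw [TT, PP, ← bb_mul_self a]
  rw [show a * bb a * x * bb a * star a = a * (bb a * x * bb a * star a) by
    simp only [mul_assoc]]
  rw [norm_a_mul]
  rw [show bb a * (bb a * x * bb a * star a) = (bb a * (bb a * x * bb a)) * star a by
    simp only [mul_assoc]]
  rw [norm_mul_sa]
  congr 1
  simp only [mul_assoc]

private noncomputable def Phi (a : A) (n : ℕ) (z : A) : A :=
  a * KK a n * z * KK a n * star a

private lemma Phi_norm_le (a : A) (n : ℕ) (z : A) : ‖Phi a n z‖ ≤ ‖z‖ := by
  have h1 : ‖a * KK a n‖ ≤ 1 := by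
    rw [norm_a_mul a (KK a n), ← uu_eq]; exact E1 a n
  have h2 : ‖KK a n * star a‖ ≤ 1 := by
    rw [norm_mul_sa, ← uu_eq']; exact E1 a n
  have he : Phi a n z = (a * KK a n) * z * (KK a n * star a) := by
    rw [Phi]; simp only [mul_assoc]
  rw [he]
  calc ‖(a * KK a n) * z * (KK a n * star a)‖
      ≤ ‖(a * KK a n) * z‖ * ‖KK a n * star a‖ := norm_mul_le _ _
  _ ≤ ‖(a * KK a n) * z‖ := mul_le_of_le_one_right (norm_nonneg _) h2
  _ ≤ ‖a * KK a n‖ * ‖z‖ := norm_mul_le _ _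
  _ ≤ ‖z‖ := mul_le_of_le_one_left (norm_nonneg z) h1

private lemma Phi_sub (a : A) (n : ℕ) (z w : A) :
    Phi a n z - Phi a n w = Phi a n (z - w) := by
  simp only [Phi]; noncomm_ring

private lemma Phi_add (a : A) (n : ℕ) (z w : A) :
    Phi a n (z + w) = Phi a n z + Phi a n w := by
  simp only [Phi]; noncomm_ring

private lemma Phi_smul (a : A) (n : ℕ) (c : ℂ) (z : A) :
    Phi a n (c • z) = c • Phi a n z := by
  simp only [Phi, mul_smul_comm, smul_mul_assoc]

private lemma Phi_P_eq (a : A) (n : ℕ) (x : A) :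
    Phi a n (PP a x) = (a * uu a n) * (bb a * x * bb a) * (uu a n * star a) := by
  have hc : ∀ z, KK a n * (bb a * z) = bb a * (KK a n * z) := fun z => by
    rw [← mul_assoc, KK_comm_bb, mul_assoc]
  rw [Phi, PP, uu_eq, ← bb_mul_self a]
  simp only [mul_assoc, hc]

private lemma tendsto_Phi_P (a : A) (x : A) :
    Filter.Tendsto (fun n => Phi a n (PP a x)) Filter.atTop (nhds (TT a x)) := by
  have h : TT a x = a * (bb a * x * bb a) * star a := by
    rw [TT]; simp only [mul_assoc]
  rw [h]
  simp only [Phi_P_eq]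
  exact ((tendsto_a_uu a).mul tendsto_const_nhds).mul (tendsto_uu_sa a)

private def Sset (a : A) : Set A := {z : A | ∃ x : A, z = PP a x}

private lemma conv (a : A) (z : A) (hz : z ∈ closure (Sset a)) :
    ∃ L, Filter.Tendsto (fun n => Phi a n z) Filter.atTop (nhds L) := by
  have hC : CauchySeq (fun n => Phi a n z) := by
    rw [Metric.cauchySeq_iff']
    intro ε hε
    obtain ⟨s, hsS, hsd⟩ := Metric.mem_closure_iff.mp hz (ε/4) (by linarith)
    obtain ⟨x, rfl⟩ := hsS
    have hc : CauchySeq (fun n => Phi a n (PP a x)) := (tendsto_Phi_P a x).cauchySeq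
    obtain ⟨N, hN⟩ := Metric.cauchySeq_iff'.mp hc (ε/4) (by linarith)
    refine ⟨N, fun n hn => ?_⟩
    have l1 : ∀ m : ℕ, dist (Phi a m z) (Phi a m (PP a x)) ≤ ε/4 := by
      intro m
      rw [dist_eq_norm, Phi_sub]
      calc ‖Phi a m (z - PP a x)‖ ≤ ‖z - PP a x‖ := Phi_norm_le a m _
      _ ≤ ε/4 := by rw [← dist_eq_norm]; exact hsd.le
    calc dist (Phi a n z) (Phi a N z)
        ≤ dist (Phi a n z) (Phi a n (PP a x)) + dist (Phi a n (PP a x)) (Phi a N (PP a x))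
          + dist (Phi a N (PP a x)) (Phi a N z) := dist_triangle4 _ _ _ _
    _ < ε := by
        have hm := hN n hn
        have h1 := l1 n
        have h3 := l1 N
        rw [dist_comm] at h3
        linarith
  exact cauchySeq_tendsto_of_complete hC

private noncomputable def phi (a : A) (z : A) : A :=
  limUnder Filter.atTop (fun n => Phi a n z)

private lemma hphi (a : A) {z : A} (hz : z ∈ closure (Sset a)) :
    Filter.Tendsto (fun n => Phi a n z) Filter.atTop (nhds (phi a z)) := by
  obtain ⟨L, hL⟩ := conv a z hz
  rwa [phi, hL.limUnder_eq]

private lemma phi_P (a : A) (x : A) : phi a (PP a x) = TT a x :=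
  tendsto_nhds_unique (hphi a (subset_closure ⟨x, rfl⟩)) (tendsto_Phi_P a x)

private lemma wlip (a : A) {z w : A} (hz : z ∈ closure (Sset a)) (hw : w ∈ closure (Sset a)) :
    ‖phi a z - phi a w‖ ≤ ‖z - w‖ := by
  have h2 : Filter.Tendsto (fun n => ‖Phi a n z - Phi a n w‖) Filter.atTop
      (nhds ‖phi a z - phi a w‖) := ((hphi a hz).sub (hphi a hw)).norm
  apply le_of_tendsto h2
  filter_upwards with n
  rw [Phi_sub]
  exact Phi_norm_le a n _
private lemma Sset_add {a z w : A} (hz : z ∈ Sset a) (hw : w ∈ Sset a) : z + w ∈ Sset a := by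
  obtain ⟨x, rfl⟩ := hz; obtain ⟨y, rfl⟩ := hw
  exact ⟨x + y, by simp only [PP]; noncomm_ring⟩

private lemma Sset_sub {a z w : A} (hz : z ∈ Sset a) (hw : w ∈ Sset a) : z - w ∈ Sset a := by
  obtain ⟨x, rfl⟩ := hz; obtain ⟨y, rfl⟩ := hw
  exact ⟨x - y, by simp only [PP]; noncomm_ring⟩

private lemma Sset_mul {a z w : A} (hz : z ∈ Sset a) (hw : w ∈ Sset a) : z * w ∈ Sset a := by
  obtain ⟨x, rfl⟩ := hz; obtain ⟨y, rfl⟩ := hw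
  exact ⟨x * ((star a * a) * (star a * a)) * y, by simp only [PP]; noncomm_ring⟩

private lemma Sset_star {a z : A} (hz : z ∈ Sset a) : star z ∈ Sset a := by
  obtain ⟨x, rfl⟩ := hz
  exact ⟨star x, by simp only [PP, star_mul, star_star, mul_assoc]⟩

private lemma Sset_smul {a z : A} (c : ℂ) (hz : z ∈ Sset a) : c • z ∈ Sset a := by
  obtain ⟨x, rfl⟩ := hz
  exact ⟨c • x, by simp only [PP, mul_smul_comm, smul_mul_assoc]⟩

private lemma cl_add {a z w : A} (hz : z ∈ closure (Sset a)) (hw : w ∈ closure (Sset a)) :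
    z + w ∈ closure (Sset a) := by
  obtain ⟨s, hs, hsl⟩ := mem_closure_iff_seq_limit.mp hz
  obtain ⟨t, ht, htl⟩ := mem_closure_iff_seq_limit.mp hw
  exact mem_closure_of_tendsto (hsl.add htl)
    (Filter.Eventually.of_forall fun n => Sset_add (hs n) (ht n))

private lemma cl_sub {a z w : A} (hz : z ∈ closure (Sset a)) (hw : w ∈ closure (Sset a)) :
    z - w ∈ closure (Sset a) := by
  obtain ⟨s, hs, hsl⟩ := mem_closure_iff_seq_limit.mp hz
  obtain ⟨t, ht, htl⟩ := mem_closure_iff_seq_limit.mp hw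
  exact mem_closure_of_tendsto (hsl.sub htl)
    (Filter.Eventually.of_forall fun n => Sset_sub (hs n) (ht n))

private lemma cl_mul {a z w : A} (hz : z ∈ closure (Sset a)) (hw : w ∈ closure (Sset a)) :
    z * w ∈ closure (Sset a) := by
  obtain ⟨s, hs, hsl⟩ := mem_closure_iff_seq_limit.mp hz
  obtain ⟨t, ht, htl⟩ := mem_closure_iff_seq_limit.mp hw
  exact mem_closure_of_tendsto (hsl.mul htl)
    (Filter.Eventually.of_forall fun n => Sset_mul (hs n) (ht n))

private lemma cl_star {a z : A} (hz : z ∈ closure (Sset a)) : star z ∈ closure (Sset a) := by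
  obtain ⟨s, hs, hsl⟩ := mem_closure_iff_seq_limit.mp hz
  exact mem_closure_of_tendsto hsl.star
    (Filter.Eventually.of_forall fun n => Sset_star (hs n))

private lemma cl_smul {a z : A} (c : ℂ) (hz : z ∈ closure (Sset a)) :
    c • z ∈ closure (Sset a) := by
  obtain ⟨s, hs, hsl⟩ := mem_closure_iff_seq_limit.mp hz
  exact mem_closure_of_tendsto (hsl.const_smul c)
    (Filter.Eventually.of_forall fun n => Sset_smul c (hs n))

private lemma phi_add (a : A) {z w : A} (hz : z ∈ closure (Sset a))
    (hw : w ∈ closure (Sset a)) : phi a (z + w) = phi a z + phi a w :=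
  tendsto_nhds_unique (hphi a (cl_add hz hw))
    (((hphi a hz).add (hphi a hw)).congr fun n => (Phi_add a n z w).symm)

private lemma phi_sub (a : A) {z w : A} (hz : z ∈ closure (Sset a))
    (hw : w ∈ closure (Sset a)) : phi a (z - w) = phi a z - phi a w :=
  tendsto_nhds_unique (hphi a (cl_sub hz hw))
    (((hphi a hz).sub (hphi a hw)).congr fun n => Phi_sub a n z w)

private lemma phi_smul (a : A) (c : ℂ) {z : A} (hz : z ∈ closure (Sset a)) :
    phi a (c • z) = c • phi a z :=
  tendsto_nhds_unique (hphi a (cl_smul c hz))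
    (((hphi a hz).const_smul c).congr fun n => (Phi_smul a n c z).symm)

private lemma phi_tendsto (a : A) {z : A} {s : ℕ → A} (hz : z ∈ closure (Sset a))
    (hsmem : ∀ j, s j ∈ closure (Sset a)) (hslim : Filter.Tendsto s Filter.atTop (nhds z)) :
    Filter.Tendsto (fun j => phi a (s j)) Filter.atTop (nhds (phi a z)) := by
  rw [tendsto_iff_dist_tendsto_zero]
  apply squeeze_zero (g := fun j => ‖s j - z‖) (fun _ => dist_nonneg)
    (fun j => by rw [dist_eq_norm]; exact wlip a (hsmem j) hz)
  simpa [dist_eq_norm] using tendsto_iff_dist_tendsto_zero.mp hslim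

private lemma phi_norm (a : A) {z : A} (hz : z ∈ closure (Sset a)) : ‖phi a z‖ = ‖z‖ := by
  obtain ⟨s, hs, hsl⟩ := mem_closure_iff_seq_limit.mp hz
  have h1 : ∀ j, ‖phi a (s j)‖ = ‖s j‖ := by
    intro j
    obtain ⟨x, hx⟩ := hs j
    rw [hx, phi_P, norm_TT]
  have h2 := (phi_tendsto a hz (fun j => subset_closure (hs j)) hsl).norm
  exact tendsto_nhds_unique h2 (hsl.norm.congr fun j => (h1 j).symm)

private lemma TT_star (a x : A) : star (TT a x) = TT a (star x) := by
  simp only [TT, star_mul, star_star, (bb_sa a).star_eq, mul_assoc]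

private lemma PP_star (a x : A) : star (PP a x) = PP a (star x) := by
  simp only [PP, star_mul, star_star, mul_assoc]

private lemma phi_star (a : A) {z : A} (hz : z ∈ closure (Sset a)) :
    phi a (star z) = star (phi a z) := by
  obtain ⟨s, hs, hsl⟩ := mem_closure_iff_seq_limit.mp hz
  have h1 : ∀ j, phi a (star (s j)) = star (phi a (s j)) := by
    intro j
    obtain ⟨x, hx⟩ := hs j
    rw [hx, PP_star, phi_P, phi_P, TT_star]
  have h2 : Filter.Tendsto (fun j => phi a (star (s j))) Filter.atTop (nhds (phi a (star z))) :=
    phi_tendsto a (cl_star hz) (fun j => subset_closure (Sset_star (hs j))) hsl.star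
  have h3 : Filter.Tendsto (fun j => star (phi a (s j))) Filter.atTop
      (nhds (star (phi a z))) :=
    (phi_tendsto a hz (fun j => subset_closure (hs j)) hsl).star
  exact tendsto_nhds_unique h2 (h3.congr fun j => (h1 j).symm)

private lemma TT_mul (a x y : A) :
    TT a (x * ((star a * a) * (star a * a)) * y) = TT a x * TT a y := by
  have hw2 : ∀ z, star a * (a * z) = bb a * (bb a * z) := fun z => by
    rw [← mul_assoc, ← mul_assoc, bb_mul_self]
  simp only [TT, mul_assoc, hw2]

private lemma phi_mul (a : A) {z w : A} (hz : z ∈ closure (Sset a))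
    (hw : w ∈ closure (Sset a)) : phi a (z * w) = phi a z * phi a w := by
  obtain ⟨s, hs, hsl⟩ := mem_closure_iff_seq_limit.mp hz
  obtain ⟨t, ht, htl⟩ := mem_closure_iff_seq_limit.mp hw
  have h1 : ∀ j, phi a (s j * t j) = phi a (s j) * phi a (t j) := by
    intro j
    obtain ⟨x, hx⟩ := hs j
    obtain ⟨y, hy⟩ := ht j
    have hPP : PP a x * PP a y = PP a (x * ((star a * a) * (star a * a)) * y) := by
      simp only [PP]; noncomm_ring
    rw [hx, hy, hPP, phi_P, phi_P, phi_P, TT_mul]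
  have h2 : Filter.Tendsto (fun j => phi a (s j * t j)) Filter.atTop (nhds (phi a (z * w))) :=
    phi_tendsto a (cl_mul hz hw) (fun j => subset_closure (Sset_mul (hs j) (ht j)))
      (hsl.mul htl)
  have h3 : Filter.Tendsto (fun j => phi a (s j) * phi a (t j)) Filter.atTop
      (nhds (phi a z * phi a w)) :=
    (phi_tendsto a hz (fun j => subset_closure (hs j)) hsl).mul
      (phi_tendsto a hw (fun j => subset_closure (ht j)) htl)
  exact tendsto_nhds_unique h2 (h3.congr fun j => (h1 j).symm)

private lemma phi_injOn (a : A) {z w : A} (hz : z ∈ closure (Sset a))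
    (hw : w ∈ closure (Sset a)) (h : phi a z = phi a w) : z = w := by
  have h1 : ‖z - w‖ = 0 := by
    rw [← phi_norm a (cl_sub hz hw), phi_sub a hz hw, h, sub_self, norm_zero]
  rw [← sub_eq_zero]
  exact norm_eq_zero.mp h1
private lemma aca_mem (a c : A) : a * c * star a ∈ closure (Sset (star a)) := by
  have hmem : ∀ n : ℕ, (a * uu a n) * c * (uu a n * star a) ∈ Sset (star a) := by
    intro n
    refine ⟨a * vv a n * star a * a * c * star a * a * vv a n * star a, ?_⟩
    simp only [PP, star_star]
    rw [uu_eq_vv]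
    simp only [mul_assoc]
  have htend : Filter.Tendsto (fun n => (a * uu a n) * c * (uu a n * star a)) Filter.atTop
      (nhds (a * c * star a)) := by
    have := ((tendsto_a_uu a).mul (tendsto_const_nhds (x := c))).mul (tendsto_uu_sa a)
    simpa [mul_assoc] using this
  exact mem_closure_of_tendsto htend (Filter.Eventually.of_forall hmem)

private lemma phi_mapsTo (a : A) {z : A} (hz : z ∈ closure (Sset a)) :
    phi a z ∈ closure (Sset (star a)) := by
  have h1 : ∀ n : ℕ, Phi a n z ∈ closure (Sset (star a)) := by
    intro n
    rw [show Phi a n z = a * (KK a n * z * KK a n) * star a from by simp only [Phi, mul_assoc]]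
    exact aca_mem a _
  exact isClosed_closure.mem_of_tendsto (hphi a hz) (Filter.Eventually.of_forall h1)

private lemma surj_aux1' (a y : A) :
    PP (star a) y ∈ closure {w : A | ∃ x : A, w = TT a x} := by
  have hmem : ∀ n : ℕ, (a * uu a n) * (star a * y * a) * (uu a n * star a)
      ∈ {w : A | ∃ x : A, w = TT a x} := by
    intro n
    refine ⟨KK a n * (star a * y * a) * KK a n, ?_⟩
    have hc : ∀ z, KK a n * (bb a * z) = bb a * (KK a n * z) := fun z => by
      rw [← mul_assoc, KK_comm_bb, mul_assoc]
    simp only [TT, uu_eq, mul_assoc, hc]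
  have htend : Filter.Tendsto (fun n => (a * uu a n) * (star a * y * a) * (uu a n * star a))
      Filter.atTop (nhds (PP (star a) y)) := by
    have := ((tendsto_a_uu a).mul (tendsto_const_nhds (x := star a * y * a))).mul
      (tendsto_uu_sa a)
    have he : a * (star a * y * a) * star a = PP (star a) y := by
      simp only [PP, star_star, mul_assoc]
    rw [← he]
    simpa [mul_assoc] using this
  exact mem_closure_of_tendsto htend (Filter.Eventually.of_forall hmem)

private lemma surj_aux2 (a : A) {w : A} (hw : w ∈ closure {w : A | ∃ x : A, w = TT a x}) :
    ∃ z ∈ closure (Sset a), phi a z = w := by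
  obtain ⟨s, hsmem, hslim⟩ := mem_closure_iff_seq_limit.mp hw
  choose x hx using hsmem
  have hcauchy : CauchySeq (fun j => PP a (x j)) := by
    have h1 : CauchySeq s := hslim.cauchySeq
    rw [Metric.cauchySeq_iff] at h1 ⊢
    intro ε hε
    obtain ⟨N, hN⟩ := h1 ε hε
    refine ⟨N, fun m hm n hn => ?_⟩
    have hd := hN m hm n hn
    rw [dist_eq_norm] at hd ⊢
    have he : PP a (x m) - PP a (x n) = PP a (x m - x n) := by simp only [PP]; noncomm_ring
    have he2 : s m - s n = TT a (x m - x n) := by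
      rw [hx m, hx n]; simp only [TT]; noncomm_ring
    rw [he, ← norm_TT, ← he2]
    exact hd
  obtain ⟨z, hz⟩ := cauchySeq_tendsto_of_complete hcauchy
  have hzmem : z ∈ closure (Sset a) :=
    mem_closure_of_tendsto hz (Filter.Eventually.of_forall fun j => ⟨x j, rfl⟩)
  refine ⟨z, hzmem, ?_⟩
  have h2 : Filter.Tendsto (fun j => phi a (PP a (x j))) Filter.atTop (nhds (phi a z)) :=
    phi_tendsto a hzmem (fun j => subset_closure ⟨x j, rfl⟩) hz
  have h3 : (fun j => phi a (PP a (x j))) = s := funext fun j => by rw [phi_P, ← hx]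
  rw [h3] at h2
  exact tendsto_nhds_unique h2 hslim

private lemma phi_surjOn (a : A) {w : A} (hw : w ∈ closure (Sset (star a))) :
    ∃ z ∈ closure (Sset a), phi a z = w := by
  apply surj_aux2 a
  have hsub : Sset (star a) ⊆ closure {w : A | ∃ x : A, w = TT a x} := by
    rintro s ⟨y, rfl⟩
    exact surj_aux1' a y
  exact closure_minimal hsub isClosed_closure hw
end aux

/-- for an element `a` of a C*-algebra `A`, the hereditary
sub-C*-algebras generated by `a*a` and `aa*` (the closures of
`(a*a)·A·(a*a)` and `(aa*)·A·(aa*)`) are closed *-subalgebras of `A` and are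
isometrically *-isomorphic. -/
theorem stmt13 (A : Type*) [NonUnitalCStarAlgebra A] (a : A)
    (H1 H2 : Set A)
    (hH1 : H1 = closure {z : A | ∃ x : A, z = (star a * a) * x * (star a * a)})
    (hH2 : H2 = closure {z : A | ∃ x : A, z = (a * star a) * x * (a * star a)}) :
    IsClosed H1 ∧ IsClosed H2 ∧
    (∀ x ∈ H1, ∀ y ∈ H1, x + y ∈ H1 ∧ x * y ∈ H1) ∧
    (∀ x ∈ H1, star x ∈ H1 ∧ ∀ c : ℂ, c • x ∈ H1) ∧
    (∀ x ∈ H2, ∀ y ∈ H2, x + y ∈ H2 ∧ x * y ∈ H2) ∧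
    (∀ x ∈ H2, star x ∈ H2 ∧ ∀ c : ℂ, c • x ∈ H2) ∧
    ∃ φ : A → A, Set.BijOn φ H1 H2 ∧
      (∀ x ∈ H1, ∀ y ∈ H1, φ (x + y) = φ x + φ y ∧ φ (x * y) = φ x * φ y) ∧
      (∀ x ∈ H1, φ (star x) = star (φ x) ∧ (∀ c : ℂ, φ (c • x) = c • φ x) ∧
        ‖φ x‖ = ‖x‖) := by
  have e2 : {z : A | ∃ x : A, z = (a * star a) * x * (a * star a)} = Sset (star a) := by
    ext z; simp [Sset, PP, star_star]
  have e1 : {z : A | ∃ x : A, z = (star a * a) * x * (star a * a)} = Sset a := rfl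
  subst hH1 hH2
  rw [e1, e2]
  refine ⟨isClosed_closure, isClosed_closure,
    fun x hx y hy => ⟨cl_add hx hy, cl_mul hx hy⟩,
    fun x hx => ⟨cl_star hx, fun c => cl_smul c hx⟩,
    fun x hx y hy => ⟨cl_add hx hy, cl_mul hx hy⟩,
    fun x hx => ⟨cl_star hx, fun c => cl_smul c hx⟩,
    phi a,
    ⟨fun z hz => phi_mapsTo a hz,
     fun z hz w hw h => phi_injOn a hz hw h,
     fun w hw => phi_surjOn a hw⟩,
    fun x hx y hy => ⟨phi_add a hx hy, phi_mul a hx hy⟩,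
    fun x hx => ⟨phi_star a hx, fun c => phi_smul a c hx, phi_norm a hx⟩⟩
end

section
/- Let A be a unital C*-algebra, let (u_i)_{i∈I} be a net in A with 0 ≤ u_i ≤ 1 for all i, and let h, k ∈ A with 0 ≤ k ≤ h. If the net (u_i·h) converges in norm to h, then the net (u_i·k) converges in norm to k. (Consequently, the set {h ∈ A : u_i·h → h} is a hereditary subset of A: it contains every element k with 0 ≤ k ≤ h for some h in the set.) -/
/-- Auxiliary: for `0 ≤ k`, we have `k * k ≤ ‖k‖ • k`. -/
lemma stmt19_sq_le_norm_smul {A : Type*} [CStarAlgebra A] [PartialOrder A] [StarOrderedRing A]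
    {k : A} (hk0 : 0 ≤ k) : k * k ≤ ‖k‖ • k := by
  set s := CFC.sqrt k with hsdef
  have hs : s * s = k := CFC.sqrt_mul_sqrt_self k hk0
  have hsa : IsSelfAdjoint s := IsSelfAdjoint.of_nonneg (CFC.sqrt_nonneg k)
  have key := CStarAlgebra.star_left_conjugate_le_norm_smul (a := s) (b := k)
    (IsSelfAdjoint.of_nonneg hk0)
  rw [hsa.star_eq, hs] at key
  calc k * k = s * k * s := by
        rw [← hs]; simp only [mul_assoc]
    _ ≤ ‖k‖ • k := key

/-- in a unital C*-algebra (with its canonical order), if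
`(u_i)` is a net with `0 ≤ u_i ≤ 1` and `u_i · h → h` in norm, then
`u_i · k → k` in norm for every `k` with `0 ≤ k ≤ h`; i.e. the set
`{h : u_i h → h}` is hereditary. -/
theorem stmt19 (A : Type*) [CStarAlgebra A] [PartialOrder A] [StarOrderedRing A]
    (I : Type*) [Nonempty I] [SemilatticeSup I]
    (u : I → A) (hu : ∀ i, 0 ≤ u i ∧ u i ≤ 1)
    (h k : A) (hk0 : 0 ≤ k) (hkh : k ≤ h)
    (hconv : Filter.Tendsto (fun i => u i * h) Filter.atTop (nhds h)) :
    Filter.Tendsto (fun i => u i * k) Filter.atTop (nhds k) := by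
  rw [← tendsto_sub_nhds_zero_iff, tendsto_zero_iff_norm_tendsto_zero]
  have key : ∀ i, ‖u i * k - k‖ ^ 2 ≤ ‖k‖ * ‖u i * h - h‖ := by
    intro i
    set v : A := 1 - u i with hv
    have hv0 : 0 ≤ v := sub_nonneg.mpr (hu i).2
    have hvsa : IsSelfAdjoint v := IsSelfAdjoint.of_nonneg hv0
    have hvnorm : ‖v‖ ≤ 1 := by
      have h1 : v ≤ 1 := by
        have := (hu i).1
        calc v = 1 - u i := hv
          _ ≤ 1 - 0 := by exact sub_le_sub_left this 1
          _ = 1 := sub_zero 1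
      calc ‖v‖ ≤ ‖(1 : A)‖ := CStarAlgebra.norm_le_norm_of_nonneg_of_le hv0 h1
        _ ≤ 1 := by
            rcases subsingleton_or_nontrivial A with hA | hA
            · simp [Subsingleton.elim (1 : A) 0]
            · exact le_of_eq norm_one
    have heq : u i * k - k = -(v * k) := by rw [hv]; noncomm_ring
    have heqh : u i * h - h = -(v * h) := by rw [hv]; noncomm_ring
    rw [heq, heqh, norm_neg, norm_neg]
    -- ‖v k‖² = ‖(v k)(k v)‖ = ‖v k² v‖
    have hnorm : ‖v * k‖ ^ 2 = ‖v * (k * k) * v‖ := by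
      have := CStarRing.norm_self_mul_star (x := v * k)
      have hstar : star (v * k) = k * v := by
        rw [star_mul, hvsa.star_eq, (IsSelfAdjoint.of_nonneg hk0).star_eq]
      rw [hstar] at this
      rw [sq, ← this]; congr 1; noncomm_ring
    rw [hnorm]
    -- v k² v ≤ ‖k‖ • (v k v) ≤ ‖k‖ • (v h v)
    have h1 : v * (k * k) * v ≤ ‖k‖ • (v * h * v) := by
      have step1 : v * (k * k) * v ≤ v * (‖k‖ • k) * v := by
        simpa [hvsa.star_eq] using star_left_conjugate_le_conjugate (stmt19_sq_le_norm_smul hk0) v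
      have step2 : v * (‖k‖ • k) * v = ‖k‖ • (v * k * v) := by
        simp [mul_smul_comm, smul_mul_assoc]
      have step3 : v * k * v ≤ v * h * v := by
        simpa [hvsa.star_eq] using star_left_conjugate_le_conjugate hkh v
      calc v * (k * k) * v ≤ ‖k‖ • (v * k * v) := step2 ▸ step1
        _ ≤ ‖k‖ • (v * h * v) := smul_le_smul_of_nonneg_left step3 (norm_nonneg k)
    have hpos : 0 ≤ v * (k * k) * v := by
      have : v * (k * k) * v = star (k * v) * (k * v) := by
        rw [star_mul, hvsa.star_eq, (IsSelfAdjoint.of_nonneg hk0).star_eq]; noncomm_ring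
      rw [this]; exact star_mul_self_nonneg _
    calc ‖v * (k * k) * v‖ ≤ ‖‖k‖ • (v * h * v)‖ :=
          CStarAlgebra.norm_le_norm_of_nonneg_of_le hpos h1
      _ = ‖k‖ * ‖v * h * v‖ := by
          rw [norm_smul, Real.norm_of_nonneg (norm_nonneg k)]
      _ ≤ ‖k‖ * (‖v * h‖ * ‖v‖) := by
          gcongr; exact norm_mul_le _ _
      _ ≤ ‖k‖ * ‖v * h‖ := by
          have h2 : ‖v * h‖ * ‖v‖ ≤ ‖v * h‖ :=
            mul_le_of_le_one_right (norm_nonneg _) hvnorm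
          exact mul_le_mul_of_nonneg_left h2 (norm_nonneg k)
  -- squeeze
  have hconv' : Filter.Tendsto (fun i => ‖k‖ * ‖u i * h - h‖) Filter.atTop (nhds 0) := by
    rw [← tendsto_sub_nhds_zero_iff, tendsto_zero_iff_norm_tendsto_zero] at hconv
    simpa using hconv.const_mul ‖k‖
  have hsq : Filter.Tendsto (fun i => ‖u i * k - k‖ ^ 2) Filter.atTop (nhds 0) :=
    squeeze_zero (fun i => by positivity) key hconv'
  have := hsq.sqrt
  simpa [Real.sqrt_sq (norm_nonneg _)] using this
end
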